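/- arXiv:1308.3026 — 5 statements merged into one kernel-verified Lean document; each statement's English description precedes it below -/
import Mathlib

section
/- Let A be a diagonalizable derivation of the Heisenberg algebra 𝓗_n with positive eigenvalues α_1 < ⋯ < α_{k+1} and eigenspaces U_1, …, U_{k+1}. Then [U_i, U_j] = 0 for all 1 ≤ i, j ≤ k+1 with i + j ≠ k+1. -/
open scoped BigOperators RealInnerProductSpace ENNReal
open Module Filter

noncomputable section

/-- The underlying space of the `n`-th Heisenberg group/algebra: `ℝ^{2n+1}`
with a fixed inner product. -/
abbrev HV (n : ℕ) : Type := EuclideanSpace ℝ (Fin (2 * n + 1))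

/-- `br` is a Heisenberg Lie bracket on `ℝ^{2n+1}`: with respect to some basis
`b`, the only nontrivial bracket relations are `[b_{2s}, b_{2s+1}] = b_{2n}` (0-indexed). -/
def IsHeisenbergBracket (n : ℕ) (br : HV n →ₗ[ℝ] HV n →ₗ[ℝ] HV n) : Prop :=
  ∃ b : Basis (Fin (2 * n + 1)) ℝ (HV n),
    ∀ i j : Fin (2 * n + 1),
      br (b i) (b j) =
        (if (i : ℕ) % 2 = 0 ∧ (j : ℕ) = (i : ℕ) + 1 ∧ (i : ℕ) < 2 * n then (1 : ℝ)
         else if (j : ℕ) % 2 = 0 ∧ (i : ℕ) = (j : ℕ) + 1 ∧ (j : ℕ) < 2 * n then (-1 : ℝ)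
         else 0) • b ⟨2 * n, by omega⟩

/-- `A` is a derivation of the Lie algebra `(ℝ^{2n+1}, br)`. -/
def IsDerivation {n : ℕ} (br : HV n →ₗ[ℝ] HV n →ₗ[ℝ] HV n)
    (A : HV n →ₗ[ℝ] HV n) : Prop :=
  ∀ x y, A (br x y) = br (A x) y + br x (A y)

/-- The group product `x * y = x + y + (1/2)[x,y]` (BCH formula). -/
def hMul {n : ℕ} (br : HV n →ₗ[ℝ] HV n →ₗ[ℝ] HV n) (x y : HV n) : HV n :=
  x + y + (2⁻¹ : ℝ) • br x y

/-- The left coset `g * S`. -/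
def leftCoset {n : ℕ} (br : HV n →ₗ[ℝ] HV n →ₗ[ℝ] HV n) (g : HV n)
    (S : Set (HV n)) : Set (HV n) :=
  hMul br g '' S

/-- `‖x‖_A = Σ_i |x_i|^{1/α_i}`, where `x_i` is the component of `x` in the
eigenspace `U i` (computed as the orthogonal projection; the eigenspaces are
assumed mutually orthogonal with sum everything). -/
def normA {n k : ℕ} (α : Fin (k + 1) → ℝ) (U : Fin (k + 1) → Submodule ℝ (HV n))
    (x : HV n) : ℝ :=
  ∑ i, ‖((U i).orthogonalProjectionOnto x : HV n)‖ ^ (α i)⁻¹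

/-- The parabolic visual quasimetric `d_A(p,q) = ‖(-p) * q‖_A`. -/
def qd {n k : ℕ} (br : HV n →ₗ[ℝ] HV n →ₗ[ℝ] HV n) (α : Fin (k + 1) → ℝ)
    (U : Fin (k + 1) → Submodule ℝ (HV n)) (p q : HV n) : ℝ :=
  normA α U (hMul br (-p) q)

/-- `η` is a homeomorphism of `[0,∞)` onto itself. -/
def IsHomeoOfNonneg (η : ℝ → ℝ) : Prop :=
  η 0 = 0 ∧ StrictMonoOn η (Set.Ici 0) ∧ ContinuousOn η (Set.Ici 0) ∧
    ∀ s : ℝ, 0 ≤ s → ∃ t : ℝ, 0 ≤ t ∧ η t = s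

/-- `F` is an `η`-quasisymmetry from `(X, d1)` to `(X, d2)`. -/
def IsQS {X : Type*} (d1 d2 : X → X → ℝ) (η : ℝ → ℝ) (F : X → X) : Prop :=
  Function.Bijective F ∧
    ∀ x y z : X, x ≠ y → y ≠ z → x ≠ z →
      d2 (F x) (F y) / d2 (F x) (F z) ≤ η (d1 x y / d1 x z)

/-- `L_F(x,r) = sup { d2(F x, F x') : d1(x,x') ≤ r }`. -/
def LFr {X : Type*} (d1 d2 : X → X → ℝ) (F : X → X) (x : X) (r : ℝ) : ℝ≥0∞ :=
  ⨆ (x' : X) (_ : d1 x x' ≤ r), ENNReal.ofReal (d2 (F x) (F x'))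

/-- `l_F(x,r) = inf { d2(F x, F x') : d1(x,x') ≥ r }`. -/
def lFr {X : Type*} (d1 d2 : X → X → ℝ) (F : X → X) (x : X) (r : ℝ) : ℝ≥0∞ :=
  ⨅ (x' : X) (_ : r ≤ d1 x x'), ENNReal.ofReal (d2 (F x) (F x'))

/-- `L_F(x) = limsup_{r→0⁺} L_F(x,r)/r`. -/
def LF {X : Type*} (d1 d2 : X → X → ℝ) (F : X → X) (x : X) : ℝ≥0∞ :=
  Filter.limsup (fun r : ℝ => LFr d1 d2 F x r / ENNReal.ofReal r) (nhdsWithin 0 (Set.Ioi 0))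

/-- `l_F(x) = liminf_{r→0⁺} l_F(x,r)/r`. -/
def lF {X : Type*} (d1 d2 : X → X → ℝ) (F : X → X) (x : X) : ℝ≥0∞ :=
  Filter.liminf (fun r : ℝ => lFr d1 d2 F x r / ENNReal.ofReal r) (nhdsWithin 0 (Set.Ioi 0))

theorem stmt1
    (n k : ℕ) (hn : 1 ≤ n) (hk : 1 ≤ k)
    (br : HV n →ₗ[ℝ] HV n →ₗ[ℝ] HV n) (hbr : IsHeisenbergBracket n br)
    (A : HV n →ₗ[ℝ] HV n) (hA : IsDerivation br A)
    (α : Fin (k + 1) → ℝ) (hαmono : StrictMono α) (hαpos : ∀ i, 0 < α i)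
    (U : Fin (k + 1) → Submodule ℝ (HV n))
    (hU : ∀ i, U i = Module.End.eigenspace A (α i))
    (hUne : ∀ i, U i ≠ ⊥) (hUspan : (⨆ i, U i) = ⊤) :
    ∀ i j : Fin (k + 1), (i : ℕ) + (j : ℕ) + 2 ≠ k + 1 →
      ∀ x ∈ U i, ∀ y ∈ U j, br x y = 0 := by
  obtain ⟨b, hb0⟩ := hbr
  have hlt : 2 * n < 2 * n + 1 := by omega
  set Z : HV n := b ⟨2 * n, hlt⟩ with hZdef
  have hb : ∀ i j : Fin (2 * n + 1),
      br (b i) (b j) =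
        (if (i : ℕ) % 2 = 0 ∧ (j : ℕ) = (i : ℕ) + 1 ∧ (i : ℕ) < 2 * n then (1 : ℝ)
         else if (j : ℕ) % 2 = 0 ∧ (i : ℕ) = (j : ℕ) + 1 ∧ (j : ℕ) < 2 * n then (-1 : ℝ)
         else 0) • Z := hb0
  clear hb0
  have hZne : Z ≠ 0 := b.ne_zero _
  have hZinj : ∀ a c : ℝ, a • Z = c • Z → a = c := by
    intro a c h
    have h2 : (a - c) • Z = 0 := by rw [sub_smul, h, sub_self]
    rcases smul_eq_zero.mp h2 with h3 | h3
    · exact sub_eq_zero.mp h3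
    · exact absurd h3 hZne
  have hZl : ∀ y, br Z y = 0 := by
    have h0 : br Z = 0 := b.ext fun j => by
      have hv : ((⟨2 * n, hlt⟩ : Fin (2 * n + 1)) : ℕ) = 2 * n := rfl
      rw [hZdef, hb, if_neg (by omega), if_neg (by rintro ⟨h1, h2, h3⟩; omega), zero_smul,
        LinearMap.zero_apply]
    intro y; rw [h0, LinearMap.zero_apply]
  have hZr : ∀ y, br y Z = 0 := by
    have h0 : br.flip Z = 0 := b.ext fun i => by
      have hv : ((⟨2 * n, hlt⟩ : Fin (2 * n + 1)) : ℕ) = 2 * n := rfl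
      have hi := i.isLt
      rw [LinearMap.flip_apply, hZdef, hb, if_neg (by rintro ⟨h1, h2, h3⟩; omega),
        if_neg (by rintro ⟨h1, h2, h3⟩; omega), zero_smul, LinearMap.zero_apply]
    intro y
    simpa using LinearMap.congr_fun h0 y
  have hmemspan : ∀ x y : HV n, br x y ∈ Submodule.span ℝ {Z} := by
    intro x y
    rw [← b.sum_repr x, ← b.sum_repr y]
    simp only [map_sum, LinearMap.sum_apply, map_smul, LinearMap.smul_apply]
    refine Submodule.sum_mem _ fun j _ =>
      Submodule.smul_mem _ _ (Submodule.sum_mem _ fun i _ => ?_)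
    rw [hb i j]
    exact Submodule.smul_mem _ _ (Submodule.smul_mem _ _ (Submodule.mem_span_singleton_self Z))
  have hcen : ∀ x : HV n, (∀ y, br x y = 0) → x ∈ Submodule.span ℝ {Z} := by
    intro x hx
    have hcoef : ∀ m : Fin (2 * n + 1), (m : ℕ) < 2 * n → b.repr x m = 0 := by
      intro m hm
      have key : ∀ (j : Fin (2 * n + 1)) (s : ℝ), s ≠ 0 →
          (∀ i : Fin (2 * n + 1), br (b i) (b j) = (if i = m then s else 0) • Z) →
          b.repr x m = 0 := by
        intro j s hs hsc
        have e : br x (b j) = (b.repr x m * s) • Z := by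
          conv_lhs => rw [← b.sum_repr x]
          simp only [map_sum, LinearMap.sum_apply, map_smul, LinearMap.smul_apply, hsc]
          rw [Finset.sum_eq_single m]
          · rw [if_pos rfl, smul_smul]
          · intro i _ hi; rw [if_neg hi, zero_smul, smul_zero]
          · intro h; exact absurd (Finset.mem_univ m) h
        have e0 : (b.repr x m * s) • Z = 0 := by rw [← e]; exact hx (b j)
        rcases smul_eq_zero.mp e0 with h | h
        · rcases mul_eq_zero.mp h with h | h
          · exact h
          · exact absurd h hs
        · exact absurd h hZne
      rcases Nat.even_or_odd (m : ℕ) with he | ho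
      · have hm2 : (m : ℕ) % 2 = 0 := Nat.even_iff.mp he
        have hjlt : (m : ℕ) + 1 < 2 * n + 1 := by omega
        refine key ⟨(m : ℕ) + 1, hjlt⟩ 1 one_ne_zero fun i => ?_
        have hjv : ((⟨(m : ℕ) + 1, hjlt⟩ : Fin (2 * n + 1)) : ℕ) = (m : ℕ) + 1 := rfl
        rw [hb]
        by_cases him : i = m
        · subst him
          rw [if_pos ⟨hm2, hjv, hm⟩, if_pos rfl]
        · have hv : (i : ℕ) ≠ (m : ℕ) := fun h => him (Fin.ext h)
          rw [if_neg (by rintro ⟨h1, h2, h3⟩; omega), if_neg (by rintro ⟨h1, h2, h3⟩; omega),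
            if_neg him]
      · have hm2 : (m : ℕ) % 2 = 1 := Nat.odd_iff.mp ho
        have hjlt : (m : ℕ) - 1 < 2 * n + 1 := by omega
        refine key ⟨(m : ℕ) - 1, hjlt⟩ (-1) (by norm_num) fun i => ?_
        have hjv : ((⟨(m : ℕ) - 1, hjlt⟩ : Fin (2 * n + 1)) : ℕ) = (m : ℕ) - 1 := rfl
        rw [hb]
        by_cases him : i = m
        · subst him
          rw [if_neg (by rintro ⟨h1, h2, h3⟩; omega), if_pos (by omega), if_pos rfl]
        · have hv : (i : ℕ) ≠ (m : ℕ) := fun h => him (Fin.ext h)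
          rw [if_neg (by rintro ⟨h1, h2, h3⟩; omega), if_neg (by rintro ⟨h1, h2, h3⟩; omega),
            if_neg him]
    have hxZ : x = b.repr x ⟨2 * n, hlt⟩ • Z := by
      conv_lhs => rw [← b.sum_repr x]
      exact Finset.sum_eq_single _
        (fun i _ hi => by
          rw [hcoef i (by
            have h1 := i.isLt
            have h2 : (i : ℕ) ≠ 2 * n := fun h => hi (Fin.ext h)
            omega), zero_smul])
        (fun h => absurd (Finset.mem_univ _) h)
    rw [hxZ]
    exact Submodule.smul_mem _ _ (Submodule.mem_span_singleton_self Z)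
  have heig : ∀ (i : Fin (k + 1)) (x : HV n), x ∈ U i → A x = α i • x := by
    intro i x hx
    rw [hU i] at hx
    exact Module.End.mem_eigenspace_iff.mp hx
  have hAZspan : A Z ∈ Submodule.span ℝ {Z} := by
    apply hcen
    intro y
    have h1 := hA Z y
    rw [hZl y, map_zero, hZl (A y), add_zero] at h1
    exact h1.symm
  obtain ⟨β, hβ⟩ := Submodule.mem_span_singleton.mp hAZspan
  have hkey : ∀ (i j : Fin (k + 1)) (x y : HV n), x ∈ U i → y ∈ U j → br x y ≠ 0 →
      α i + α j = β := by
    intro i j x y hx hy hne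
    obtain ⟨c, hc⟩ := Submodule.mem_span_singleton.mp (hmemspan x y)
    have hcne : c ≠ 0 := by rintro rfl; rw [zero_smul] at hc; exact hne hc.symm
    have h1 : A (br x y) = (α i + α j) • br x y := by
      calc A (br x y) = br (A x) y + br x (A y) := hA x y
        _ = br ((α i) • x) y + br x ((α j) • y) := by rw [heig i x hx, heig j y hy]
        _ = (α i + α j) • br x y := by rw [LinearMap.map_smul₂, map_smul, add_smul]
    have h2 : A (br x y) = β • br x y := by
      rw [← hc, map_smul, ← hβ]
      exact smul_comm c β Z
    rw [h1] at h2
    rw [← hc, smul_smul, smul_smul] at h2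
    exact mul_right_cancel₀ hcne (hZinj _ _ h2)
  have hpart : ∀ (i : Fin (k + 1)) (x : HV n), x ∈ U i → x ∉ Submodule.span ℝ {Z} →
      ∃ j, α i + α j = β := by
    intro i x hx hxs
    have hbx : ∃ y, br x y ≠ 0 := by
      by_contra h; push_neg at h; exact hxs (hcen x h)
    obtain ⟨y, hy⟩ := hbx
    by_contra hcon
    push_neg at hcon
    have hker : ∀ j : Fin (k + 1), U j ≤ LinearMap.ker (br x) := by
      intro j z hz
      rw [LinearMap.mem_ker]
      by_contra hz0
      exact hcon j (hkey i j x z hx hz hz0)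
    have hy2 : y ∈ LinearMap.ker (br x) := by
      have hy' : y ∈ (⊤ : Submodule ℝ (HV n)) := trivial
      rw [← hUspan] at hy'
      exact (iSup_le hker) hy'
    exact hy (LinearMap.mem_ker.mp hy2)
  have hZeig : ∃ m : Fin (k + 1), β = α m := by
    by_contra h
    push_neg at h
    have hd := Module.End.eigenspaces_iSupIndep A β
    have hZ1 : Z ∈ Module.End.eigenspace A β := Module.End.mem_eigenspace_iff.mpr hβ.symm
    have hZ2 : Z ∈ ⨆ (μ : ℝ) (_ : μ ≠ β), Module.End.eigenspace A μ := by
      have hle : (⊤ : Submodule ℝ (HV n)) ≤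
          ⨆ (μ : ℝ) (_ : μ ≠ β), Module.End.eigenspace A μ := by
        rw [← hUspan]
        refine iSup_le fun i => ?_
        rw [hU i]
        exact le_iSup₂ (f := fun (μ : ℝ) (_ : μ ≠ β) => Module.End.eigenspace A μ)
          (α i) (Ne.symm (h i))
      exact hle trivial
    exact hZne (Submodule.disjoint_def.mp hd Z hZ1 hZ2)
  obtain ⟨m, hβm⟩ := hZeig
  have hZm : Z ∈ U m := by
    rw [hU m]
    refine Module.End.mem_eigenspace_iff.mpr ?_
    rw [← hβ, hβm]
  have hmlast : m = Fin.last k := by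
    by_contra hne'
    obtain ⟨x, hxU, hx0⟩ := (Submodule.ne_bot_iff _).mp (hUne (Fin.last k))
    have hxs : x ∉ Submodule.span ℝ {Z} := by
      intro hmem
      obtain ⟨a, ha⟩ := Submodule.mem_span_singleton.mp hmem
      have hane : a ≠ 0 := by rintro rfl; rw [zero_smul] at ha; exact hx0 ha.symm
      have hZlast : Z ∈ U (Fin.last k) := by
        have h' : a⁻¹ • x ∈ U (Fin.last k) := Submodule.smul_mem _ _ hxU
        rwa [← ha, smul_smul, inv_mul_cancel₀ hane, one_smul] at h'
      have h1 : A Z = α (Fin.last k) • Z := heig _ Z hZlast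
      have h2 : A Z = α m • Z := heig _ Z hZm
      have h3 := hZinj _ _ (h1.symm.trans h2)
      exact hne' (hαmono.injective h3.symm)
    obtain ⟨j, hj⟩ := hpart (Fin.last k) x hxU hxs
    have hml : α m ≤ α (Fin.last k) := hαmono.monotone (Fin.le_last m)
    have hjpos := hαpos j
    rw [hβm] at hj
    linarith
  subst hmlast
  have hexf : ∀ i : Fin k, ∃ j : Fin k,
      α i.castSucc + α j.castSucc = α (Fin.last k) := by
    intro i
    obtain ⟨x, hxU, hx0⟩ := (Submodule.ne_bot_iff _).mp (hUne i.castSucc)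
    have hxs : x ∉ Submodule.span ℝ {Z} := by
      intro hmem
      obtain ⟨a, ha⟩ := Submodule.mem_span_singleton.mp hmem
      have hane : a ≠ 0 := by rintro rfl; rw [zero_smul] at ha; exact hx0 ha.symm
      have hZi : Z ∈ U i.castSucc := by
        have h' : a⁻¹ • x ∈ U i.castSucc := Submodule.smul_mem _ _ hxU
        rwa [← ha, smul_smul, inv_mul_cancel₀ hane, one_smul] at h'
      have h1 : A Z = α i.castSucc • Z := heig _ Z hZi
      have h2 : A Z = α (Fin.last k) • Z := heig _ Z hZm
      have h3 := hαmono.injective (hZinj _ _ (h1.symm.trans h2))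
      exact absurd h3 (Fin.castSucc_lt_last i).ne
    obtain ⟨j, hj⟩ := hpart i.castSucc x hxU hxs
    rw [hβm] at hj
    have hjlast : j ≠ Fin.last k := by
      rintro rfl
      have := hαpos i.castSucc
      linarith
    have hjk : (j : ℕ) < k := by
      have h1 := j.isLt
      have h2 : (j : ℕ) ≠ k := fun h => hjlast (Fin.ext (by rw [h, Fin.val_last]))
      omega
    refine ⟨⟨(j : ℕ), hjk⟩, ?_⟩
    rwa [show ((⟨(j : ℕ), hjk⟩ : Fin k)).castSucc = j from Fin.ext rfl]
  choose f hf using hexf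
  have hanti : StrictAnti f := by
    intro a c hac
    have h1 := hf a
    have h2 := hf c
    have h3 : α (f c).castSucc < α (f a).castSucc := by
      have h4 := hαmono (Fin.castSucc_lt_castSucc_iff.mpr hac)
      linarith
    exact Fin.castSucc_lt_castSucc_iff.mp (hαmono.lt_iff_lt.mp h3)
  have hfrev : ∀ i, f i = i.rev := by
    have hg : StrictMono (fun i : Fin k => f i.rev) := by
      intro a c hac
      exact hanti (Fin.rev_lt_rev.mpr hac)
    have hgsurj : Function.Surjective (fun i : Fin k => f i.rev) :=
      Finite.surjective_of_injective hg.injective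
    haveI : WellFoundedLT (Fin k) := Finite.to_wellFoundedLT
    have hgid : (fun i : Fin k => f i.rev) = id :=
      (hg.range_inj strictMono_id).mp (hgsurj.range_eq.trans Set.range_id.symm)
    intro i
    simpa [Fin.rev_rev] using congrFun hgid i.rev
  intro i j hij x hx y hy
  by_contra hne0
  have hsum := hkey i j x y hx hy hne0
  rw [hβm] at hsum
  have hilast : i ≠ Fin.last k := by
    rintro rfl
    have := hαpos j
    linarith
  have hik : (i : ℕ) < k := by
    have h1 := i.isLt
    have h2 : (i : ℕ) ≠ k := fun h => hilast (Fin.ext (by rw [h, Fin.val_last]))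
    omega
  have hi0 : ((⟨(i : ℕ), hik⟩ : Fin k)).castSucc = i := Fin.ext rfl
  have hfi := hf ⟨(i : ℕ), hik⟩
  rw [hi0] at hfi
  have hαj : α j = α ((f ⟨(i : ℕ), hik⟩).castSucc) := by linarith
  have hj' : j = (f ⟨(i : ℕ), hik⟩).castSucc := hαmono.injective hαj
  have hrev := hfrev ⟨(i : ℕ), hik⟩
  have hval : (j : ℕ) = k - ((i : ℕ) + 1) := by
    rw [hj', hrev]; rfl
  omega
end
end

section
/- Let A be a diagonalizable derivation of the Heisenberg algebra 𝓗_n with positive eigenvalues α_1 < ⋯ < α_{k+1} and eigenspaces U_1, …, U_{k+1}. Then for every 1 ≤ i ≤ k one has [U_i, U_{k+1−i}] ≠ 0 and α_i + α_{k+1−i} = α_{k+1}. -/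
open scoped BigOperators RealInnerProductSpace ENNReal
open Module Filter

noncomputable section

def coefH (n : ℕ) (i j : Fin (2 * n + 1)) : ℝ :=
  if (i : ℕ) % 2 = 0 ∧ (j : ℕ) = (i : ℕ) + 1 ∧ (i : ℕ) < 2 * n then (1 : ℝ)
  else if (j : ℕ) % 2 = 0 ∧ (i : ℕ) = (j : ℕ) + 1 ∧ (j : ℕ) < 2 * n then (-1 : ℝ)
  else 0

section
variable {n : ℕ} (br : HV n →ₗ[ℝ] HV n →ₗ[ℝ] HV n)
  (b : Basis (Fin (2 * n + 1)) ℝ (HV n))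
  (hb : ∀ i j, br (b i) (b j) = coefH n i j • b ⟨2 * n, by omega⟩)

include hb

theorem br_left_z : ∀ y, br (b ⟨2 * n, by omega⟩) y = 0 := by
  have h : br (b ⟨2 * n, by omega⟩) = 0 := by
    apply b.ext; intro j
    rw [hb]
    have : coefH n ⟨2 * n, by omega⟩ j = 0 := by
      have hj := j.isLt
      simp only [coefH, Fin.val_mk]
      split_ifs with h1 h2
      · exfalso; omega
      · exfalso; omega
      · rfl
    rw [this, zero_smul]; rfl
  intro y; rw [h]; rfl

theorem br_right_z : ∀ y, br y (b ⟨2 * n, by omega⟩) = 0 := by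
  have h : br.flip (b ⟨2 * n, by omega⟩) = 0 := by
    apply b.ext; intro i
    rw [LinearMap.flip_apply, hb]
    have : coefH n i ⟨2 * n, by omega⟩ = 0 := by
      have hi := i.isLt
      simp only [coefH, Fin.val_mk]
      split_ifs with h1 h2
      · exfalso; omega
      · exfalso; omega
      · rfl
    rw [this, zero_smul]; rfl
  intro y
  have := LinearMap.ext_iff.mp h y
  simpa using this

theorem br_mem_span : ∀ x y, br x y ∈ Submodule.span ℝ {b ⟨2 * n, by omega⟩} := by
  set S := Submodule.span ℝ {b (⟨2 * n, by omega⟩ : Fin (2 * n + 1))} with hS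
  have hL : br.compr₂ S.mkQ = 0 := by
    apply b.ext; intro i
    apply b.ext; intro j
    simp only [LinearMap.compr₂_apply, LinearMap.zero_apply, hb, map_smul]
    have : S.mkQ (b ⟨2 * n, by omega⟩) = 0 := by
      rw [Submodule.mkQ_apply, Submodule.Quotient.mk_eq_zero]
      exact Submodule.mem_span_singleton_self _
    rw [this, smul_zero]
  intro x y
  have h2 := LinearMap.ext_iff.mp (LinearMap.ext_iff.mp hL x) y
  simp only [LinearMap.compr₂_apply, LinearMap.zero_apply, Submodule.mkQ_apply,
    Submodule.Quotient.mk_eq_zero] at h2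
  exact h2

theorem br_repr (x : HV n) (j : Fin (2 * n + 1)) :
    br x (b j) = (∑ i, b.repr x i * coefH n i j) • b ⟨2 * n, by omega⟩ := by
  conv_lhs => rw [← b.sum_repr x]
  rw [map_sum, LinearMap.sum_apply, Finset.sum_smul]
  apply Finset.sum_congr rfl
  intro i _
  rw [map_smul, LinearMap.smul_apply, hb, smul_smul]

theorem br_nondeg (x : HV n) (hx : ∀ y, br x y = 0) :
    x ∈ Submodule.span ℝ {b ⟨2 * n, by omega⟩} := by
  have hzne : b (⟨2 * n, by omega⟩ : Fin (2 * n + 1)) ≠ 0 := b.ne_zero _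
  have hcoef : ∀ s : ℕ, (hs : s < 2 * n) → b.repr x ⟨s, by omega⟩ = 0 := by
    intro s hs
    rcases Nat.even_or_odd s with hpar | hpar
    · -- s even : pair with b ⟨s+1⟩
      have hs2 : s % 2 = 0 := Nat.even_iff.mp hpar
      have h0 := hx (b ⟨s + 1, by omega⟩)
      rw [br_repr br b hb] at h0
      have hsum : (∑ i, b.repr x i * coefH n i ⟨s + 1, by omega⟩) = 0 :=
        (smul_eq_zero.mp h0).resolve_right hzne
      rw [Finset.sum_eq_single (⟨s, by omega⟩ : Fin (2 * n + 1))] at hsum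
      · have hone : coefH n ⟨s, by omega⟩ ⟨s + 1, by omega⟩ = 1 := by
          unfold coefH
          rw [if_pos ⟨hs2, rfl, hs⟩]
        rw [hone, mul_one] at hsum
        exact hsum
      · intro i _ hne
        have hvne : (i : ℕ) ≠ s := fun hh => hne (Fin.ext hh)
        have hival := i.isLt
        have : coefH n i ⟨s + 1, by omega⟩ = 0 := by
          simp only [coefH, Fin.val_mk]
          split_ifs with h1 h2
          · exfalso; omega
          · exfalso; omega
          · rfl
        rw [this, mul_zero]
      · intro h; exact absurd (Finset.mem_univ _) h
    · -- s odd : pair with b ⟨s-1⟩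
      have hs2 : s % 2 = 1 := Nat.odd_iff.mp hpar
      have h0 := hx (b ⟨s - 1, by omega⟩)
      rw [br_repr br b hb] at h0
      have hsum : (∑ i, b.repr x i * coefH n i ⟨s - 1, by omega⟩) = 0 :=
        (smul_eq_zero.mp h0).resolve_right hzne
      rw [Finset.sum_eq_single (⟨s, by omega⟩ : Fin (2 * n + 1))] at hsum
      · have hone : coefH n ⟨s, by omega⟩ ⟨s - 1, by omega⟩ = -1 := by
          simp only [coefH, Fin.val_mk]
          rw [if_neg (by omega), if_pos ⟨by omega, by omega, by omega⟩]
        rw [hone] at hsum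
        have : b.repr x ⟨s, by omega⟩ * -1 = - b.repr x ⟨s, by omega⟩ := by ring
        rw [this, neg_eq_zero] at hsum
        exact hsum
      · intro i _ hne
        have hvne : (i : ℕ) ≠ s := fun hh => hne (Fin.ext hh)
        have hival := i.isLt
        have : coefH n i ⟨s - 1, by omega⟩ = 0 := by
          simp only [coefH, Fin.val_mk]
          split_ifs with h1 h2
          · exfalso; omega
          · exfalso; omega
          · rfl
        rw [this, mul_zero]
      · intro h; exact absurd (Finset.mem_univ _) h
  have hx_eq : x = b.repr x ⟨2 * n, by omega⟩ • b ⟨2 * n, by omega⟩ := by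
    conv_lhs => rw [← b.sum_repr x]
    rw [Finset.sum_eq_single (⟨2 * n, by omega⟩ : Fin (2 * n + 1))]
    · intro i _ hne
      have hvne : (i : ℕ) ≠ 2 * n := fun hh => hne (Fin.ext hh)
      have hival := i.isLt
      rw [hcoef i (by omega)]
      · simp
    · intro h; exact absurd (Finset.mem_univ _) h
  rw [hx_eq]
  exact Submodule.smul_mem _ _ (Submodule.mem_span_singleton_self _)

end



theorem natchain' (g : ℕ → ℕ) (k : ℕ)
    (hdec : ∀ a b, a < b → b < k → g b < g a)
    (hlt : ∀ a, a < k → g a < k) :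
    ∀ a, a < k → g a = k - 1 - a := by
  have step : ∀ d a, a + d < k → g (a + d) + d ≤ g a := by
    intro d
    induction d with
    | zero => intro a _; simp
    | succ d ih =>
      intro a h
      have h1 : (a+1) + d < k := by omega
      have := ih (a+1) h1
      have h2 : g (a+1) < g a := hdec a (a+1) (by omega) (by omega)
      rw [show a + (d+1) = (a+1) + d from by omega]
      omega
  intro a ha
  have hub : g a ≤ k - 1 - a := by
    have := step a 0 (by omega)
    have := hlt 0 (by omega)
    simp at *
    omega
  have hlb : k - 1 - a ≤ g a := by
    have := step (k - 1 - a) a (by omega)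
    omega
  omega

theorem stmt2_aux
    (n k : ℕ) (hn : 1 ≤ n) (hk : 1 ≤ k)
    (br : HV n →ₗ[ℝ] HV n →ₗ[ℝ] HV n)
    (b : Basis (Fin (2 * n + 1)) ℝ (HV n))
    (hleft : ∀ y, br (b ⟨2 * n, by omega⟩) y = 0)
    (hspan : ∀ x y, br x y ∈ Submodule.span ℝ {b ⟨2 * n, by omega⟩})
    (hnondeg : ∀ x : HV n, (∀ y, br x y = 0) → x ∈ Submodule.span ℝ {b ⟨2 * n, by omega⟩})
    (A : HV n →ₗ[ℝ] HV n) (hA : ∀ x y, A (br x y) = br (A x) y + br x (A y))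
    (α : Fin (k + 1) → ℝ) (hαmono : StrictMono α) (hαpos : ∀ i, 0 < α i)
    (U : Fin (k + 1) → Submodule ℝ (HV n))
    (hU : ∀ i, U i = Module.End.eigenspace A (α i))
    (hUne : ∀ i, U i ≠ ⊥) (hUspan : (⨆ i, U i) = ⊤) :
    ∀ i j : Fin (k + 1), (i : ℕ) + (j : ℕ) + 2 = k + 1 →
      (∃ x ∈ U i, ∃ y ∈ U j, br x y ≠ 0) ∧ α i + α j = α (Fin.last k) := by
  classical
  set z : HV n := b ⟨2 * n, by omega⟩ with hzdef
  have hzne : z ≠ 0 := b.ne_zero _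
  -- A z is central, hence a multiple of z
  have hAz0 : ∀ y, br (A z) y = 0 := by
    intro y
    have h := hA z y
    rw [hleft, map_zero, hleft] at h
    have := h.symm
    rwa [add_zero] at this
  obtain ⟨c, hc'⟩ := Submodule.mem_span_singleton.mp (hnondeg (A z) hAz0)
  have hc : A z = c • z := hc'.symm
  -- bracket of eigenvectors: eigenvalue equation
  have hpair_eval : ∀ (i j : Fin (k + 1)) (x y : HV n), x ∈ U i → y ∈ U j →
      br x y ≠ 0 → α i + α j = c := by
    intro i j x y hx hy hne
    have hx' : A x = α i • x := Module.End.mem_eigenspace_iff.mp (by rw [← hU i]; exact hx)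
    have hy' : A y = α j • y := Module.End.mem_eigenspace_iff.mp (by rw [← hU j]; exact hy)
    have h1 : A (br x y) = (α i + α j) • br x y := by
      rw [hA x y, hx', hy', map_smul, LinearMap.smul_apply, map_smul, add_smul]
    obtain ⟨t, ht'⟩ := Submodule.mem_span_singleton.mp (hspan x y)
    have ht : br x y = t • z := ht'.symm
    have h2 : A (br x y) = c • br x y := by
      rw [ht, map_smul, hc, smul_smul, smul_smul, mul_comm t c]
    have h3 : (α i + α j - c) • br x y = 0 := by
      rw [sub_smul, ← h1, h2, sub_self]
    rcases smul_eq_zero.mp h3 with h | h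
    · linarith [sub_eq_zero.mp h]
    · exact absurd h hne
  -- if U i is inside the center line then c = α i
  have hUsub : ∀ i : Fin (k + 1), U i ≤ Submodule.span ℝ {z} → c = α i := by
    intro i hle
    obtain ⟨x, hxU, hxne⟩ := Submodule.exists_mem_ne_zero_of_ne_bot (hUne i)
    obtain ⟨t, ht'⟩ := Submodule.mem_span_singleton.mp (hle hxU)
    have ht : x = t • z := ht'.symm
    have htne : t ≠ 0 := by rintro rfl; rw [zero_smul] at ht; exact hxne ht
    have hzU : z ∈ U i := by
      have h := (U i).smul_mem t⁻¹ hxU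
      rw [ht, smul_smul, inv_mul_cancel₀ htne, one_smul] at h
      exact h
    have hAz : A z = α i • z := Module.End.mem_eigenspace_iff.mp (by rw [← hU i]; exact hzU)
    have h0 : (c - α i) • z = 0 := by rw [sub_smul, ← hc, hAz, sub_self]
    rcases smul_eq_zero.mp h0 with h | h
    · exact sub_eq_zero.mp h
    · exact absurd h hzne
  -- pairing existence
  have hpair_ex : ∀ i : Fin (k + 1), ¬ (U i ≤ Submodule.span ℝ {z}) →
      ∃ j : Fin (k + 1), ∃ x ∈ U i, ∃ y ∈ U j, br x y ≠ 0 := by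
    intro i hns
    obtain ⟨x, hxU, hxs⟩ := SetLike.not_le_iff_exists.mp hns
    by_contra hcon
    push_neg at hcon
    apply hxs
    apply hnondeg
    intro y
    have hy : y ∈ ⨆ j, U j := by rw [hUspan]; trivial
    have hker : (⨆ j, U j) ≤ LinearMap.ker (br x) := by
      refine iSup_le fun j y' hy' => ?_
      rw [LinearMap.mem_ker]
      exact hcon j x hxU y' hy'
    exact LinearMap.mem_ker.mp (hker hy)
  -- c is an eigenvalue among the α i
  have hm : ∃ m, α m = c := by
    by_contra h
    push_neg at h
    have hz_eig : z ∈ Module.End.eigenspace A c := Module.End.mem_eigenspace_iff.mpr hc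
    have hz_sup : z ∈ ⨆ μ : ℝ, ⨆ (_ : μ ≠ c), Module.End.eigenspace A μ := by
      have hle : (⨆ i, U i) ≤ ⨆ μ : ℝ, ⨆ (_ : μ ≠ c), Module.End.eigenspace A μ := by
        refine iSup_le fun i => ?_
        rw [hU i]
        exact le_iSup₂ (f := fun μ _ => Module.End.eigenspace A μ) (α i) (h i)
      exact hle (by rw [hUspan]; trivial)
    have hdisj := Module.End.eigenspaces_iSupIndep A c
    exact hzne (Submodule.disjoint_def.mp hdisj z hz_eig hz_sup)
  obtain ⟨m, hmc⟩ := hm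
  have hne_sub : ∀ i, i ≠ m → ¬ U i ≤ Submodule.span ℝ {z} := by
    intro i hi hle
    exact hi (hαmono.injective (hmc.trans (hUsub i hle))).symm
  have hKey0 : ∀ i, i ≠ m → ∃ j, (∃ x ∈ U i, ∃ y ∈ U j, br x y ≠ 0) ∧ α i + α j = c := by
    intro i hi
    obtain ⟨j, x, hx, y, hy, hne⟩ := hpair_ex i (hne_sub i hi)
    exact ⟨j, ⟨x, hx, y, hy, hne⟩, hpair_eval i j x y hx hy hne⟩
  have hlt_m : ∀ i, i ≠ m → i < m := by
    intro i hi
    obtain ⟨j, _, heq⟩ := hKey0 i hi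
    have hj := hαpos j
    have : α i < α m := by rw [hmc]; linarith
    exact hαmono.lt_iff_lt.mp this
  have hmlast : m = Fin.last k := by
    by_contra h
    exact absurd (hlt_m (Fin.last k) (fun h' => h h'.symm)) (not_lt.mpr (Fin.le_last m))
  have hclast : c = α (Fin.last k) := by rw [← hmc, hmlast]
  -- refined pairing
  have hKey : ∀ i : Fin (k + 1), i ≠ Fin.last k → ∃ jf : Fin (k + 1), (jf : ℕ) < k ∧
      (∃ x ∈ U i, ∃ y ∈ U jf, br x y ≠ 0) ∧ α i + α jf = α (Fin.last k) := by
    intro i hi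
    obtain ⟨jf, hbrac, heq⟩ := hKey0 i (by rw [hmlast]; exact hi)
    rw [hclast] at heq
    have hi0 := hαpos i
    have hval : α jf < α (Fin.last k) := by linarith
    have hlt' : jf < Fin.last k := hαmono.lt_iff_lt.mp hval
    have hvk : (jf : ℕ) < k := by
      have h2 := Fin.lt_def.mp hlt'
      simpa using h2
    exact ⟨jf, hvk, hbrac, heq⟩
  -- choice function, as a function on ℕ
  have hgex : ∃ G : ℕ → Fin (k + 1), ∀ a : ℕ, (ha : a < k) → (G a : ℕ) < k ∧
      (∃ x ∈ U ⟨a, by omega⟩, ∃ y ∈ U (G a), br x y ≠ 0) ∧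
      α ⟨a, by omega⟩ + α (G a) = α (Fin.last k) := by
    choose! G hG using hKey
    refine ⟨fun a => if ha : a < k then G ⟨a, by omega⟩ else 0, fun a ha => ?_⟩
    simp only [dif_pos ha]
    refine hG ⟨a, by omega⟩ ?_
    intro hcontra
    have := congrArg Fin.val hcontra
    simp [Fin.val_last] at this
    omega
  obtain ⟨G, hG⟩ := hgex
  have hdec : ∀ a b', a < b' → b' < k → (G b' : ℕ) < (G a : ℕ) := by
    intro a b' hab hbk
    have hak : a < k := lt_trans hab hbk
    obtain ⟨_, _, heqa⟩ := hG a hak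
    obtain ⟨_, _, heqb⟩ := hG b' hbk
    have hαab : α ⟨a, by omega⟩ < α ⟨b', by omega⟩ := hαmono (Fin.mk_lt_mk.mpr hab)
    have hαGG : α (G b') < α (G a) := by linarith
    exact hαmono.lt_iff_lt.mp hαGG
  have hglt : ∀ a, a < k → (G a : ℕ) < k := fun a ha => (hG a ha).1
  have geq := natchain' (fun a => (G a : ℕ)) k hdec hglt
  -- conclusion
  intro i j hij
  have hik : (i : ℕ) < k := by omega
  have hjk : (j : ℕ) < k := by omega
  obtain ⟨hlt', hbrac, heq⟩ := hG (i : ℕ) hik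
  have hgi : ((G (i : ℕ)) : ℕ) = (j : ℕ) := by
    have h := geq _ hik
    omega
  have hiU : (⟨(i : ℕ), by omega⟩ : Fin (k + 1)) = i := Fin.ext rfl
  have hjU : G (i : ℕ) = j := Fin.ext hgi
  rw [hiU, hjU] at hbrac heq
  exact ⟨hbrac, heq⟩

theorem stmt2
    (n k : ℕ) (hn : 1 ≤ n) (hk : 1 ≤ k)
    (br : HV n →ₗ[ℝ] HV n →ₗ[ℝ] HV n) (hbr : IsHeisenbergBracket n br)
    (A : HV n →ₗ[ℝ] HV n) (hA : IsDerivation br A)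
    (α : Fin (k + 1) → ℝ) (hαmono : StrictMono α) (hαpos : ∀ i, 0 < α i)
    (U : Fin (k + 1) → Submodule ℝ (HV n))
    (hU : ∀ i, U i = Module.End.eigenspace A (α i))
    (hUne : ∀ i, U i ≠ ⊥) (hUspan : (⨆ i, U i) = ⊤) :
    ∀ i j : Fin (k + 1), (i : ℕ) + (j : ℕ) + 2 = k + 1 →
      (∃ x ∈ U i, ∃ y ∈ U j, br x y ≠ 0) ∧ α i + α j = α (Fin.last k) := by
  classical
  obtain ⟨b, hb0⟩ := hbr
  have hb : ∀ i j, br (b i) (b j) = coefH n i j • b ⟨2 * n, by omega⟩ := hb0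
  exact stmt2_aux n k hn hk br b (br_left_z br b hb) (br_mem_span br b hb)
    (br_nondeg br b hb) A hA α hαmono hαpos U hU hUne hUspan
end
end

section
/- Let A be a diagonalizable derivation of the Heisenberg algebra 𝓗_n with positive eigenvalues α_1 < ⋯ < α_{k+1} and eigenspaces U_1, …, U_{k+1}. Then dim U_i = dim U_{k+1−i} for all 1 ≤ i ≤ k. -/
open scoped BigOperators RealInnerProductSpace ENNReal
open Module Filter

noncomputable section

set_option maxHeartbeats 1000000 in
theorem stmt3
    (n k : ℕ) (hn : 1 ≤ n) (hk : 1 ≤ k)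
    (br : HV n →ₗ[ℝ] HV n →ₗ[ℝ] HV n) (hbr : IsHeisenbergBracket n br)
    (A : HV n →ₗ[ℝ] HV n) (hA : IsDerivation br A)
    (α : Fin (k + 1) → ℝ) (hαmono : StrictMono α) (hαpos : ∀ i, 0 < α i)
    (U : Fin (k + 1) → Submodule ℝ (HV n))
    (hU : ∀ i, U i = Module.End.eigenspace A (α i))
    (hUne : ∀ i, U i ≠ ⊥) (hUspan : (⨆ i, U i) = ⊤) :
    ∀ i j : Fin (k + 1), (i : ℕ) + (j : ℕ) + 2 = k + 1 →
      Module.finrank ℝ (U i) = Module.finrank ℝ (U j) := by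
  obtain ⟨b, hb⟩ := hbr
  set lst : Fin (2 * n + 1) := ⟨2 * n, by omega⟩ with hlst
  set z : HV n := b lst with hzdef
  have hzne : z ≠ 0 := b.ne_zero lst
  set ω : HV n →ₗ[ℝ] HV n →ₗ[ℝ] ℝ := br.compr₂ (b.coord lst) with homega
  have hωb : ∀ i j : Fin (2 * n + 1), ω (b i) (b j) =
      (if (i : ℕ) % 2 = 0 ∧ (j : ℕ) = (i : ℕ) + 1 ∧ (i : ℕ) < 2 * n then (1 : ℝ)
       else if (j : ℕ) % 2 = 0 ∧ (i : ℕ) = (j : ℕ) + 1 ∧ (j : ℕ) < 2 * n then (-1 : ℝ)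
       else 0) := by
    intro i j
    have : ω (b i) (b j) = b.coord lst (br (b i) (b j)) := rfl
    rw [this, hb i j, map_smul, Basis.coord_apply, Basis.repr_self]
    simp
  have hbrz : ∀ x y, br x y = ω x y • z := by
    have heq : br = ω.compr₂ (LinearMap.toSpanSingleton ℝ (HV n) z) := by
      refine b.ext fun i => b.ext fun j => ?_
      have h1 : (ω.compr₂ (LinearMap.toSpanSingleton ℝ (HV n) z)) (b i) (b j)
          = ω (b i) (b j) • z := rfl
      rw [h1, hωb i j, hb i j]
    intro x y
    conv_lhs => rw [heq]
    rfl
  -- the eigenvalue of the center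
  have h01 : br (b ⟨0, by omega⟩) (b ⟨1, by omega⟩) = z := by
    rw [hb, if_pos ⟨rfl, rfl, show 0 < 2 * n by omega⟩, one_smul]
  obtain ⟨μ, hAz⟩ : ∃ μ : ℝ, A z = μ • z := by
    refine ⟨ω (A (b ⟨0, by omega⟩)) (b ⟨1, by omega⟩)
      + ω (b ⟨0, by omega⟩) (A (b ⟨1, by omega⟩)), ?_⟩
    conv_lhs => rw [← h01]
    rw [hA, hbrz (A _), hbrz _ (A _), ← add_smul]
  have hder : ∀ x y, ω (A x) y + ω x (A y) = μ * ω x y := by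
    intro x y
    have h1 := hA x y
    rw [hbrz x y, map_smul, hAz, hbrz (A x) y, hbrz x (A y), ← add_smul, smul_smul] at h1
    have h2 : ω x y * μ = ω (A x) y + ω x (A y) := smul_left_injective ℝ hzne h1
    linarith
  have hmem : ∀ (i : Fin (k+1)) (x : HV n), x ∈ U i → A x = α i • x := by
    intro i x hx
    rw [hU i] at hx
    exact Module.End.mem_eigenspace_iff.mp hx
  have hF1 : ∀ (i j : Fin (k+1)) (x y : HV n), x ∈ U i → y ∈ U j →
      α i + α j ≠ μ → ω x y = 0 := by
    intro i j x y hx hy hne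
    have h1 := hder x y
    rw [hmem i x hx, hmem j y hy] at h1
    simp only [map_smul, LinearMap.smul_apply, smul_eq_mul] at h1
    have h2 : (α i + α j - μ) * ω x y = 0 := by linear_combination h1
    rcases mul_eq_zero.mp h2 with h | h
    · exact absurd (by linarith : α i + α j = μ) hne
    · exact h
  -- the left radical of ω is spanned by z
  have hLR : ∀ x : HV n, (∀ y, ω x y = 0) → x ∈ Submodule.span ℝ {z} := by
    intro x hx
    have key : ∀ j : Fin (2*n+1), ω x (b j) = ∑ i, b.repr x i * ω (b i) (b j) := by
      intro j
      conv_lhs => rw [← b.sum_repr x]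
      rw [map_sum, LinearMap.sum_apply]
      refine Finset.sum_congr rfl fun i _ => ?_
      rw [map_smul, LinearMap.smul_apply, smul_eq_mul]
    have hcoord : ∀ t : Fin (2*n+1), (t : ℕ) < 2*n → b.repr x t = 0 := by
      intro t ht
      rcases Nat.even_or_odd (t : ℕ) with he | ho
      · have he2 : (t : ℕ) % 2 = 0 := Nat.even_iff.mp he
        have htj : (t : ℕ) + 1 < 2*n+1 := by omega
        set j : Fin (2*n+1) := ⟨(t:ℕ)+1, htj⟩ with hj
        have hjval : (j : ℕ) = (t:ℕ)+1 := rfl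
        have hz1 : ∀ i ∈ Finset.univ, i ≠ t → b.repr x i * ω (b i) (b j) = 0 := by
          intro i _ hit
          rw [hωb, if_neg, if_neg, mul_zero]
          · rintro ⟨hj2, _, _⟩
            rw [hjval] at hj2
            omega
          · rintro ⟨_, hij, _⟩
            rw [hjval] at hij
            exact hit (Fin.ext (by omega))
        have h0 := hx (b j)
        rw [key, Finset.sum_eq_single t hz1 (fun h => absurd (Finset.mem_univ t) h),
          hωb, if_pos ⟨he2, hjval, ht⟩, mul_one] at h0
        exact h0
      · have ho2 : (t : ℕ) % 2 = 1 := Nat.odd_iff.mp ho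
        have htj : (t : ℕ) - 1 < 2*n+1 := by omega
        set j : Fin (2*n+1) := ⟨(t:ℕ)-1, htj⟩ with hj
        have hjval : (j : ℕ) = (t:ℕ)-1 := rfl
        have hz1 : ∀ i ∈ Finset.univ, i ≠ t → b.repr x i * ω (b i) (b j) = 0 := by
          intro i _ hit
          rw [hωb, if_neg, if_neg, mul_zero]
          · rintro ⟨_, hij, _⟩
            rw [hjval] at hij
            exact hit (Fin.ext (by omega))
          · rintro ⟨hi2, hij, _⟩
            rw [hjval] at hij
            omega
        have h0 := hx (b j)
        rw [key, Finset.sum_eq_single t hz1 (fun h => absurd (Finset.mem_univ t) h),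
          hωb, if_neg, if_pos ⟨by omega, by omega, by omega⟩] at h0
        · linarith
        · rintro ⟨hi2, _, _⟩
          omega
    rw [Submodule.mem_span_singleton]
    refine ⟨b.repr x lst, ?_⟩
    have hz1 : ∀ i ∈ Finset.univ, i ≠ lst → b.repr x i • b i = 0 := by
      intro i _ hil
      have hv : (i : ℕ) < 2*n := by
        have h1 := i.isLt
        have h2 : (i:ℕ) ≠ 2*n := fun h => hil (Fin.ext h)
        omega
      rw [hcoord i hv, zero_smul]
    conv_rhs => rw [← b.sum_repr x]
    rw [Finset.sum_eq_single lst hz1 (fun h => absurd (Finset.mem_univ lst) h)]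
  -- if z lies in U i then μ = α i
  have hzU : ∀ i : Fin (k+1), z ∈ U i → μ = α i := by
    intro i hz
    have h1 := hmem i z hz
    rw [hAz] at h1
    exact smul_left_injective ℝ hzne h1
  -- μ is one of the α's
  have hμα : ∃ m, μ = α m := by
    by_contra h
    push_neg at h
    have hzmem : z ∈ Module.End.eigenspace A μ := Module.End.mem_eigenspace_iff.mpr hAz
    have hle : (⨆ i, U i) ≤ ⨆ ν, ⨆ _ : ν ≠ μ, Module.End.eigenspace A ν := by
      refine iSup_le fun i => ?_
      rw [hU i]
      exact le_iSup₂ (f := fun ν (_ : ν ≠ μ) => Module.End.eigenspace A ν) (α i)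
        (fun hc => h i hc.symm)
    have hdisj := Module.End.eigenspaces_iSupIndep A (i := μ)
    have hz2 : z ∈ (⊥ : Submodule ℝ (HV n)) :=
      hdisj.le_bot (Submodule.mem_inf.mpr ⟨hzmem, hle (hUspan ▸ Submodule.mem_top)⟩)
    exact hzne ((Submodule.mem_bot ℝ).mp hz2)
  -- partner existence
  have hpart : ∀ t : Fin (k+1), μ ≠ α t → ∃ s : Fin (k+1), α t + α s = μ := by
    intro t hne
    obtain ⟨x, hxU, hxne⟩ := Submodule.exists_mem_ne_zero_of_ne_bot (hUne t)
    have hxnz : x ∉ Submodule.span ℝ {z} := by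
      intro hxz
      obtain ⟨c, hc⟩ := Submodule.mem_span_singleton.mp hxz
      have hcne : c ≠ 0 := by rintro rfl; rw [zero_smul] at hc; exact hxne hc.symm
      have hzU' : z ∈ U t := by
        have hzx : z = c⁻¹ • x := by rw [← hc, smul_smul, inv_mul_cancel₀ hcne, one_smul]
        rw [hzx]; exact Submodule.smul_mem _ _ hxU
      exact hne (hzU _ hzU')
    have hexy : ¬ ∀ y, ω x y = 0 := fun h => hxnz (hLR x h)
    push_neg at hexy
    obtain ⟨y, hy⟩ := hexy
    have hexs : ∃ s : Fin (k+1), ∃ w ∈ U s, ω x w ≠ 0 := by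
      by_contra hall
      push_neg at hall
      have hker : ∀ s, U s ≤ LinearMap.ker (ω x) := fun s w hw => by
        rw [LinearMap.mem_ker]; exact hall s w hw
      have h2 : (⊤ : Submodule ℝ (HV n)) ≤ LinearMap.ker (ω x) := hUspan ▸ iSup_le hker
      exact hy (h2 Submodule.mem_top)
    obtain ⟨s, w, hwU, hw⟩ := hexs
    refine ⟨s, ?_⟩
    by_contra hc
    exact hw (hF1 _ _ _ _ hxU hwU hc)
  -- μ = α (last)
  have hμk : μ = α (Fin.last k) := by
    by_contra hne
    obtain ⟨s, hs⟩ := hpart (Fin.last k) hne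
    obtain ⟨m, hm⟩ := hμα
    have h1 : α m ≤ α (Fin.last k) := hαmono.monotone (Fin.le_last m)
    have h2 := hαpos s
    rw [hm] at hs
    linarith
  -- partner map on Fin k
  have hσex : ∀ t : Fin k, ∃ s : Fin k, α t.castSucc + α s.castSucc = μ := by
    intro t
    have htne : μ ≠ α t.castSucc := by
      rw [hμk]
      intro h
      have := hαmono.injective h
      have hv : (Fin.last k : ℕ) = (t.castSucc : ℕ) := congrArg Fin.val this
      simp only [Fin.val_last, Fin.coe_castSucc] at hv
      omega
    obtain ⟨s, hs⟩ := hpart _ htne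
    have hslt : s ≠ Fin.last k := by
      intro h
      rw [h, ← hμk] at hs
      have := hαpos t.castSucc
      linarith
    refine ⟨s.castPred hslt, ?_⟩
    rwa [Fin.castSucc_castPred]
  choose σ hσ using hσex
  have hσanti : StrictAnti σ := by
    intro t u htu
    have h1 := hσ t
    have h2 := hσ u
    have h3 : α (σ u).castSucc < α (σ t).castSucc := by
      have : α t.castSucc < α u.castSucc :=
        hαmono (Fin.castSucc_lt_castSucc_iff.mpr htu)
      linarith
    exact Fin.castSucc_lt_castSucc_iff.mp (hαmono.lt_iff_lt.mp h3)
  have hσrev : ∀ t : Fin k, σ t = t.rev := by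
    have h1 : StrictMono (fun t : Fin k => σ t.rev) := fun a c hac =>
      hσanti (by rwa [Fin.rev_lt_rev])
    have h2 : StrictMono (fun t : Fin k => (σ t).rev) := fun a c hac => by
      simp only [Fin.rev_lt_rev]
      exact hσanti hac
    haveI : WellFoundedLT (Fin k) := Finite.to_wellFoundedLT
    intro t
    have ha : t.rev ≤ σ t.rev.rev := h1.le_apply (x := t.rev)
    rw [Fin.rev_rev] at ha
    have hb2 : t ≤ (σ t).rev := h2.le_apply (x := t)
    have hb' : (σ t).rev.rev ≤ t.rev := Fin.rev_le_rev.mpr hb2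
    rw [Fin.rev_rev] at hb'
    exact le_antisymm hb' ha
  -- the one-sided inequality
  have hle : ∀ i j : Fin (k + 1), (i : ℕ) + (j : ℕ) + 2 = k + 1 →
      finrank ℝ (U i) ≤ finrank ℝ (U j) := by
    intro i j hij
    have hik : (i : ℕ) < k := by omega
    have hjk : (j : ℕ) < k := by omega
    have hsum : α i + α j = μ := by
      have h1 := hσ ⟨(i:ℕ), hik⟩
      rw [hσrev] at h1
      have e1 : (⟨(i:ℕ), hik⟩ : Fin k).castSucc = i := Fin.ext rfl
      have e2 : ((⟨(i:ℕ), hik⟩ : Fin k).rev).castSucc = j := by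
        apply Fin.ext
        simp only [Fin.coe_castSucc, Fin.val_rev]
        omega
      rwa [e1, e2] at h1
    have hznotUi : ∀ x ∈ U i, x ∈ Submodule.span ℝ {z} → x = 0 := by
      intro x hxU hxz
      by_contra hxne
      obtain ⟨c, hc⟩ := Submodule.mem_span_singleton.mp hxz
      have hcne : c ≠ 0 := by rintro rfl; rw [zero_smul] at hc; exact hxne hc.symm
      have hzUi : z ∈ U i := by
        have hzx : z = c⁻¹ • x := by rw [← hc, smul_smul, inv_mul_cancel₀ hcne, one_smul]
        rw [hzx]; exact Submodule.smul_mem _ _ hxU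
      have hμi : μ = α i := hzU i hzUi
      rw [hμk] at hμi
      have := congrArg Fin.val (hαmono.injective hμi)
      simp only [Fin.val_last] at this
      omega
    let Φ : U i →ₗ[ℝ] (U j →ₗ[ℝ] ℝ) := ω.domRestrict₁₂ (U i) (U j)
    have hΦinj : Function.Injective Φ := by
      rw [← LinearMap.ker_eq_bot, LinearMap.ker_eq_bot']
      intro x hxΦ
      have hx0 : ∀ w : U j, ω (x : HV n) (w : HV n) = 0 := by
        intro w
        have := LinearMap.ext_iff.mp hxΦ w
        simpa [Φ, LinearMap.domRestrict₁₂_apply] using this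
      have hall : ∀ y, ω (x : HV n) y = 0 := by
        have hker : ∀ s : Fin (k+1), U s ≤ LinearMap.ker (ω (x : HV n)) := by
          intro s w hw
          rw [LinearMap.mem_ker]
          by_cases hs : s = j
          · subst hs; exact hx0 ⟨w, hw⟩
          · refine hF1 i s _ _ x.2 hw ?_
            intro hc
            apply hs
            apply hαmono.injective
            have : α s = α j := by linarith [hsum, hc]
            exact this
        intro y
        have h2 : (⊤ : Submodule ℝ (HV n)) ≤ LinearMap.ker (ω (x : HV n)) :=
          hUspan ▸ iSup_le hker
        exact h2 Submodule.mem_top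
      exact Subtype.ext (hznotUi _ x.2 (hLR _ hall))
    have hfr := LinearMap.finrank_le_finrank_of_injective hΦinj
    rwa [Subspace.dual_finrank_eq (V := U j)] at hfr
  intro i j hij
  exact le_antisymm (hle i j hij) (hle j i (by omega))
end
end

section
/- Let A be a diagonalizable derivation of the Heisenberg algebra 𝓗_n with positive eigenvalues α_1 < ⋯ < α_{k+1} and eigenspaces U_1, …, U_{k+1}, and fix a nonzero vector e ∈ U_{k+1}. If 1 ≤ i ≤ k satisfies 2i = k+1, then m_i = dim U_i is even, say m_i = 2k_i, and there is a basis e_1, η_1, …, e_{k_i}, η_{k_i} of U_i such that [e_s, η_t] = δ_{st}·e and [e_s, e_t] = [η_s, η_t] = 0 for all 1 ≤ s, t ≤ k_i. -/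
open scoped BigOperators RealInnerProductSpace ENNReal
open Module Filter

noncomputable section

lemma symp_aux (N : ℕ) :
    ∀ (V : Type) [AddCommGroup V] [Module ℝ V] [FiniteDimensional ℝ V],
      Module.finrank ℝ V = N →
      ∀ B : V →ₗ[ℝ] V →ₗ[ℝ] ℝ, (∀ x, B x x = 0) →
      (∀ x : V, x ≠ 0 → ∃ y, B x y ≠ 0) →
      ∃ ki : ℕ, N = 2 * ki ∧ ∃ v w : Fin ki → V,
        Submodule.span ℝ (Set.range (Sum.elim v w)) = ⊤ ∧
        (∀ s t, B (v s) (w t) = if s = t then (1:ℝ) else 0) ∧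
        (∀ s t, B (v s) (v t) = 0) ∧ (∀ s t, B (w s) (w t) = 0) := by
  induction N using Nat.strong_induction_on with
  | _ N ih =>
    intro V _ _ _ hrank B halt hnd
    have hskew : ∀ a c : V, B a c = - B c a := by
      intro a c
      have h := halt (a + c)
      simp only [map_add, LinearMap.add_apply, halt] at h
      linarith
    by_cases hV : ∃ x : V, x ≠ 0
    · obtain ⟨x, hx⟩ := hV
      obtain ⟨y0, hy0⟩ := hnd x hx
      set y : V := (B x y0)⁻¹ • y0 with hy_def
      have hxy : B x y = 1 := by
        simp [hy_def, map_smul, inv_mul_cancel₀ hy0]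
      have hyx : B y x = -1 := by rw [hskew y x, hxy]
      -- the symplectic complement of span{x,y}
      set W : Submodule ℝ V := LinearMap.ker (B x) ⊓ LinearMap.ker (B y) with hW_def
      have hmemW : ∀ u : V, u ∈ W ↔ B x u = 0 ∧ B y u = 0 := by
        intro u; simp [hW_def, LinearMap.mem_ker]
      -- projection onto W
      have hproj : ∀ v : V, v + (B y v) • x - (B x v) • y ∈ W := by
        intro v
        rw [hmemW]
        constructor
        · simp [map_add, map_sub, map_smul, halt, hxy, smul_eq_mul]
        · simp [map_add, map_sub, map_smul, halt, hyx, smul_eq_mul]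
      have hxW : x ∉ W := fun h => by simpa [hyx] using ((hmemW x).1 h).2
      have hindep : LinearIndependent ℝ ![x, y] := by
        rw [LinearIndependent.pair_iff]
        intro s t hst
        have h1 : B x (s • x + t • y) = t := by
          simp [map_add, map_smul, halt, hxy, smul_eq_mul]
        have h2 : B y (s • x + t • y) = -s := by
          simp [map_add, map_smul, halt, hyx, smul_eq_mul]
        rw [hst] at h1 h2
        simp at h1 h2
        exact ⟨by linarith, h1.symm⟩
      have hsup : (Submodule.span ℝ {x, y}) ⊔ W = ⊤ := by
        rw [eq_top_iff]
        intro v _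
        have hv : v = ((- B y v) • x + (B x v) • y) + (v + (B y v) • x - (B x v) • y) := by
          module
        rw [hv]
        refine Submodule.add_mem _ (Submodule.mem_sup_left ?_) (Submodule.mem_sup_right (hproj v))
        refine Submodule.add_mem _ (Submodule.smul_mem _ _ ?_) (Submodule.smul_mem _ _ ?_)
        · exact Submodule.subset_span (by simp)
        · exact Submodule.subset_span (by simp)
      have hinf : (Submodule.span ℝ {x, y}) ⊓ W = ⊥ := by
        rw [eq_bot_iff]
        rintro v ⟨hv1, hv2⟩
        obtain ⟨hv2x, hv2y⟩ := (hmemW v).1 hv2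
        have hsp : v ∈ Submodule.span ℝ {x, y} := hv1
        rw [Submodule.mem_span_pair] at hsp
        obtain ⟨s, t, rfl⟩ := hsp
        have h1 : B x (s • x + t • y) = t := by
          simp [map_add, map_smul, halt, hxy, smul_eq_mul]
        have h2 : B y (s • x + t • y) = -s := by
          simp [map_add, map_smul, halt, hyx, smul_eq_mul]
        rw [hv2x] at h1; rw [hv2y] at h2
        have hs : s = 0 := by linarith
        have ht : t = 0 := h1.symm
        simp [hs, ht]
      have hrank2 : Module.finrank ℝ (Submodule.span ℝ ({x, y} : Set V)) = 2 := by
        have : ({x, y} : Set V) = Set.range ![x, y] := by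
          simp [Matrix.range_cons, Matrix.range_empty, Set.singleton_union]
          ext v; simp [or_comm]
        rw [this, finrank_span_eq_card hindep]
        simp
      have hrankW : Module.finrank ℝ V = 2 + Module.finrank ℝ W := by
        have := Submodule.finrank_sup_add_finrank_inf_eq (Submodule.span ℝ ({x, y} : Set V)) W
        rw [hsup, hinf] at this
        simp [finrank_top] at this
        omega
      have hWlt : Module.finrank ℝ W < N := by omega
      -- restricted form
      set B' : W →ₗ[ℝ] W →ₗ[ℝ] ℝ := B.compl₁₂ W.subtype W.subtype with hB'_def
      have hB'app : ∀ u v : W, B' u v = B (u : V) (v : V) := fun _ _ => rfl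
      have halt' : ∀ u : W, B' u u = 0 := fun u => halt u
      have hnd' : ∀ u : W, u ≠ 0 → ∃ v, B' u v ≠ 0 := by
        intro u hu
        have hu' : (u : V) ≠ 0 := fun h => hu (Subtype.ext h)
        obtain ⟨v, hv⟩ := hnd (u : V) hu'
        obtain ⟨hux, huy⟩ := (hmemW u).1 u.2
        have huxx : B (u : V) x = 0 := by rw [hskew]; simp [hux]
        have huyy : B (u : V) y = 0 := by rw [hskew]; simp [huy]
        refine ⟨⟨v + (B y v) • x - (B x v) • y, hproj v⟩, ?_⟩
        rw [hB'app]
        simpa [map_add, map_sub, map_smul, huxx, huyy, smul_eq_mul] using hv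
      obtain ⟨ki', hki', v', w', hspan', hvw', hvv', hww'⟩ :=
        ih (Module.finrank ℝ W) hWlt W rfl B' halt' hnd'
      refine ⟨ki' + 1, by omega, Fin.cons x (fun s => (v' s : V)),
        Fin.cons y (fun s => (w' s : V)), ?_, ?_, ?_, ?_⟩
      · rw [eq_top_iff, ← hsup]
        have hsub : Set.range (Sum.elim (Fin.cons x (fun s => (v' s : V)) : Fin (ki'+1) → V)
            (Fin.cons y (fun s => (w' s : V)))) =
            (insert x (Set.range (fun s => (v' s : V)))) ∪
            (insert y (Set.range (fun s => (w' s : V)))) := by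
          rw [Set.Sum.elim_range, Fin.range_cons, Fin.range_cons]
        apply sup_le
        · apply Submodule.span_le.mpr
          intro u hu
          apply Submodule.subset_span
          rw [hsub]
          simp only [Set.mem_insert_iff, Set.mem_singleton_iff] at hu
          rcases hu with rfl | rfl
          · exact Or.inl (Set.mem_insert _ _)
          · exact Or.inr (Set.mem_insert _ _)
        · have hWeq : W = Submodule.map W.subtype
              (Submodule.span ℝ (Set.range (Sum.elim v' w'))) := by
            rw [hspan', Submodule.map_top, Submodule.range_subtype]
          refine hWeq.trans_le ?_
          rw [Submodule.map_span]
          apply Submodule.span_mono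
          rintro u ⟨u', ⟨j, rfl⟩, rfl⟩
          rw [hsub]
          cases j with
          | inl s => exact Or.inl (Set.mem_insert_of_mem _ ⟨s, rfl⟩)
          | inr s => exact Or.inr (Set.mem_insert_of_mem _ ⟨s, rfl⟩)
      · intro s t
        have hv'W : ∀ s, B x (v' s : V) = 0 ∧ B y (v' s : V) = 0 :=
          fun s => (hmemW _).1 (v' s).2
        have hw'W : ∀ s, B x (w' s : V) = 0 ∧ B y (w' s : V) = 0 :=
          fun s => (hmemW _).1 (w' s).2
        induction s using Fin.cases with
        | zero =>
          induction t using Fin.cases with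
          | zero => simpa using hxy
          | succ t' => simp [(hw'W t').1, (Fin.succ_ne_zero t').symm]
        | succ s' =>
          induction t using Fin.cases with
          | zero =>
            have h := (hv'W s').2
            rw [Fin.cons_succ, Fin.cons_zero, hskew, h]
            simp [Fin.succ_ne_zero s']
          | succ t' =>
            have h := hvw' s' t'
            rw [hB'app] at h
            rw [Fin.cons_succ, Fin.cons_succ, h]
            simp [Fin.succ_inj]
      · intro s t
        have hv'W : ∀ s, B x (v' s : V) = 0 ∧ B y (v' s : V) = 0 :=
          fun s => (hmemW _).1 (v' s).2
        induction s using Fin.cases with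
        | zero =>
          induction t using Fin.cases with
          | zero => simpa using halt x
          | succ t' => simpa using (hv'W t').1
        | succ s' =>
          induction t using Fin.cases with
          | zero =>
            rw [Fin.cons_succ, Fin.cons_zero, hskew, (hv'W s').1]
            simp
          | succ t' =>
            have h := hvv' s' t'
            rw [hB'app] at h
            rw [Fin.cons_succ, Fin.cons_succ, h]
      · intro s t
        have hw'W : ∀ s, B x (w' s : V) = 0 ∧ B y (w' s : V) = 0 :=
          fun s => (hmemW _).1 (w' s).2
        induction s using Fin.cases with
        | zero =>
          induction t using Fin.cases with
          | zero => simpa using halt y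
          | succ t' => simpa using (hw'W t').2
        | succ s' =>
          induction t using Fin.cases with
          | zero =>
            rw [Fin.cons_succ, Fin.cons_zero, hskew, (hw'W s').2]
            simp
          | succ t' =>
            have h := hww' s' t'
            rw [hB'app] at h
            rw [Fin.cons_succ, Fin.cons_succ, h]
    · refine ⟨0, ?_, fun s => s.elim0, fun s => s.elim0, ?_, ?_, ?_, ?_⟩
      · push_neg at hV
        have : Subsingleton V := ⟨fun a b => by rw [hV a, hV b]⟩
        have h0 : Module.finrank ℝ V = 0 := finrank_zero_of_subsingleton
        omega
      · have : Subsingleton V := ⟨fun a b => by push_neg at hV; rw [hV a, hV b]⟩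
        exact Subsingleton.elim _ _
      all_goals intro s; exact s.elim0

lemma symp_full (V : Type) [AddCommGroup V] [Module ℝ V] [FiniteDimensional ℝ V]
    (B : V →ₗ[ℝ] V →ₗ[ℝ] ℝ) (halt : ∀ x, B x x = 0)
    (hnd : ∀ x : V, x ≠ 0 → ∃ y, B x y ≠ 0) :
    ∃ ki : ℕ, Module.finrank ℝ V = 2 * ki ∧ ∃ v w : Fin ki → V,
      LinearIndependent ℝ (Sum.elim v w) ∧
      Submodule.span ℝ (Set.range (Sum.elim v w)) = ⊤ ∧
      (∀ s t, B (v s) (w t) = if s = t then (1:ℝ) else 0) ∧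
      (∀ s t, B (v s) (v t) = 0) ∧ (∀ s t, B (w s) (w t) = 0) := by
  obtain ⟨ki, hki, v, w, hspan, h1, h2, h3⟩ :=
    symp_aux (Module.finrank ℝ V) V rfl B halt hnd
  refine ⟨ki, hki, v, w, ?_, hspan, h1, h2, h3⟩
  apply linearIndependent_of_top_le_span_of_card_eq_finrank hspan.ge
  simp only [Fintype.card_sum, Fintype.card_fin, hki]; omega



variable {n : ℕ} (br : HV n →ₗ[ℝ] HV n →ₗ[ℝ] HV n)
  (b : Basis (Fin (2 * n + 1)) ℝ (HV n))

def hcoef (n : ℕ) (i j : Fin (2 * n + 1)) : ℝ :=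
  if (i : ℕ) % 2 = 0 ∧ (j : ℕ) = (i : ℕ) + 1 ∧ (i : ℕ) < 2 * n then (1 : ℝ)
  else if (j : ℕ) % 2 = 0 ∧ (i : ℕ) = (j : ℕ) + 1 ∧ (j : ℕ) < 2 * n then (-1 : ℝ)
  else 0

lemma heis_central
    (hb : ∀ i j, br (b i) (b j) = hcoef n i j • b ⟨2 * n, by omega⟩) :
    ∀ x y, br x y ∈ Submodule.span ℝ {b ⟨2 * n, by omega⟩} := by
  have hbasis : ∀ i j, br (b i) (b j) ∈ Submodule.span ℝ {b ⟨2 * n, by omega⟩} := by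
    intro i j
    rw [hb i j]
    exact Submodule.smul_mem _ _ (Submodule.mem_span_singleton_self _)
  have step1 : ∀ (i : Fin (2 * n + 1)) y,
      br (b i) y ∈ Submodule.span ℝ {b ⟨2 * n, by omega⟩} := by
    intro i y
    have hy : y ∈ Submodule.span ℝ (Set.range b) := by rw [b.span_eq]; trivial
    induction hy using Submodule.span_induction with
    | mem u hu => obtain ⟨j, rfl⟩ := hu; exact hbasis i j
    | zero => simp
    | add u v _ _ hu hv => rw [map_add]; exact Submodule.add_mem _ hu hv
    | smul a u _ hu => rw [map_smul]; exact Submodule.smul_mem _ _ hu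
  intro x y
  have hx : x ∈ Submodule.span ℝ (Set.range b) := by rw [b.span_eq]; trivial
  induction hx using Submodule.span_induction with
  | mem u hu => obtain ⟨i, rfl⟩ := hu; exact step1 i y
  | zero => simp
  | add u v _ _ hu hv =>
      rw [map_add, LinearMap.add_apply]; exact Submodule.add_mem _ hu hv
  | smul a u _ hu =>
      rw [map_smul, LinearMap.smul_apply]; exact Submodule.smul_mem _ _ hu

lemma heis_skew
    (hb : ∀ i j, br (b i) (b j) = hcoef n i j • b ⟨2 * n, by omega⟩) :
    ∀ x y, br x y = - br y x := by
  have hbasis : ∀ i j, br (b i) (b j) = - br (b j) (b i) := by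
    intro i j
    rw [hb i j, hb j i, ← neg_smul]
    congr 1
    unfold hcoef
    split_ifs <;> first | (exfalso; omega) | norm_num
  have step1 : ∀ (i : Fin (2 * n + 1)) y, br (b i) y = - br y (b i) := by
    intro i y
    have hy : y ∈ Submodule.span ℝ (Set.range b) := by rw [b.span_eq]; trivial
    induction hy using Submodule.span_induction with
    | mem u hu => obtain ⟨j, rfl⟩ := hu; exact hbasis i j
    | zero => simp
    | add u v _ _ hu hv =>
        rw [map_add, map_add, LinearMap.add_apply, hu, hv]; abel
    | smul a u _ hu =>
        rw [map_smul, map_smul, LinearMap.smul_apply, hu]; simp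
  intro x y
  have hx : x ∈ Submodule.span ℝ (Set.range b) := by rw [b.span_eq]; trivial
  induction hx using Submodule.span_induction with
  | mem u hu => obtain ⟨i, rfl⟩ := hu; exact step1 i y
  | zero => simp
  | add u v _ _ hu hv =>
      rw [map_add, map_add, LinearMap.add_apply, hu, hv]; abel
  | smul a u _ hu =>
      rw [map_smul, map_smul, LinearMap.smul_apply, hu]; simp

lemma heis_repr
    (hb : ∀ i j, br (b i) (b j) = hcoef n i j • b ⟨2 * n, by omega⟩) (x : HV n) :
    ∀ j : Fin (2 * n + 1),
      br x (b j) = (∑ i, b.repr x i * hcoef n i j) • b ⟨2 * n, by omega⟩ := by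
  intro j
  conv_lhs => rw [← b.sum_repr x]
  rw [map_sum, LinearMap.sum_apply, Finset.sum_smul]
  apply Finset.sum_congr rfl
  intro i _
  rw [map_smul, LinearMap.smul_apply, hb i j, smul_smul]

lemma heis_nondeg
    (hb : ∀ i j, br (b i) (b j) = hcoef n i j • b ⟨2 * n, by omega⟩) :
    ∀ x : HV n, (∀ y, br x y = 0) → x ∈ Submodule.span ℝ {b ⟨2 * n, by omega⟩} := by
  intro x hx
  have hzne : b ⟨2 * n, by omega⟩ ≠ 0 := b.ne_zero _
  have hzero : ∀ m : Fin (2 * n + 1), (m : ℕ) < 2 * n → b.repr x m = 0 := by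
    intro m hm
    rcases Nat.even_or_odd (m : ℕ) with he | ho
    · -- pair with j = m + 1
      have hm2 : (m : ℕ) % 2 = 0 := Nat.even_iff.mp he
      set j : Fin (2 * n + 1) := ⟨(m : ℕ) + 1, by omega⟩ with hj_def
      have hjval : (j : ℕ) = (m : ℕ) + 1 := rfl
      have h := heis_repr br b hb x j
      rw [hx _] at h
      have hsum : (∑ i, b.repr x i * hcoef n i j)
          = b.repr x m := by
        rw [Finset.sum_eq_single m]
        · unfold hcoef
          rw [if_pos ⟨hm2, by omega, hm⟩, mul_one]
        · intro i _ hne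
          unfold hcoef
          split_ifs with h1 h2
          · exact absurd (Fin.ext (by omega : (i : ℕ) = (m : ℕ))) hne
          · exfalso; omega
          · exact mul_zero _
        · intro h; exact absurd (Finset.mem_univ m) h
      rw [hsum] at h
      exact (smul_eq_zero.mp h.symm).resolve_right hzne
    · -- pair with j = m - 1
      have hm2 : (m : ℕ) % 2 = 1 := Nat.odd_iff.mp ho
      have hm1 : 1 ≤ (m : ℕ) := by omega
      set j : Fin (2 * n + 1) := ⟨(m : ℕ) - 1, by omega⟩ with hj_def
      have hjval : (j : ℕ) = (m : ℕ) - 1 := rfl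
      have h := heis_repr br b hb x j
      rw [hx _] at h
      have hsum : (∑ i, b.repr x i * hcoef n i j)
          = - b.repr x m := by
        rw [Finset.sum_eq_single m]
        · unfold hcoef
          rw [if_neg (by omega), if_pos ⟨by omega, by omega, by omega⟩]
          ring
        · intro i _ hne
          unfold hcoef
          split_ifs with h1 h2
          · exfalso; omega
          · exact absurd (Fin.ext (by omega : (i : ℕ) = (m : ℕ))) hne
          · exact mul_zero _
        · intro h; exact absurd (Finset.mem_univ m) h
      rw [hsum] at h
      have := (smul_eq_zero.mp h.symm).resolve_right hzne
      linarith [this]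
  have hxz : x = (b.repr x ⟨2 * n, by omega⟩) • b ⟨2 * n, by omega⟩ := by
    conv_lhs => rw [← b.sum_repr x]
    rw [Finset.sum_eq_single ⟨2 * n, by omega⟩]
    · intro i _ hne
      have hi : (i : ℕ) < 2 * n := by
        have := i.isLt
        rcases Nat.lt_or_ge (i : ℕ) (2 * n) with h | h
        · exact h
        · exact absurd (Fin.ext (by omega : (i : ℕ) = 2 * n)) hne
      rw [hzero i hi, zero_smul]
    · intro h; exact absurd (Finset.mem_univ _) h
  rw [hxz]
  exact Submodule.smul_mem _ _ (Submodule.mem_span_singleton_self _)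

set_option maxHeartbeats 1000000 in
theorem stmt5
    (n k : ℕ) (hn : 1 ≤ n) (hk : 1 ≤ k)
    (br : HV n →ₗ[ℝ] HV n →ₗ[ℝ] HV n) (hbr : IsHeisenbergBracket n br)
    (A : HV n →ₗ[ℝ] HV n) (hA : IsDerivation br A)
    (α : Fin (k + 1) → ℝ) (hαmono : StrictMono α) (hαpos : ∀ i, 0 < α i)
    (U : Fin (k + 1) → Submodule ℝ (HV n))
    (hU : ∀ i, U i = Module.End.eigenspace A (α i))
    (hUne : ∀ i, U i ≠ ⊥) (hUspan : (⨆ i, U i) = ⊤)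
    (e : HV n) (he : e ∈ U (Fin.last k)) (hene : e ≠ 0) :
    ∀ i : Fin (k + 1), 2 * ((i : ℕ) + 1) = k + 1 →
      ∃ ki : ℕ, Module.finrank ℝ (U i) = 2 * ki ∧
        ∃ v w : Fin ki → HV n,
          (∀ s, v s ∈ U i) ∧ (∀ s, w s ∈ U i) ∧
          LinearIndependent ℝ (Sum.elim v w) ∧
          Submodule.span ℝ (Set.range (Sum.elim v w)) = U i ∧
          (∀ s t, br (v s) (w t) = (if s = t then (1 : ℝ) else 0) • e) ∧
          (∀ s t, br (v s) (v t) = 0) ∧ (∀ s t, br (w s) (w t) = 0) := by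
  intro i h2i
  obtain ⟨b, hb0⟩ := hbr
  have hb : ∀ i j, br (b i) (b j) = hcoef n i j • b ⟨2 * n, by omega⟩ := by
    intro i j; rw [hb0 i j]; rfl
  set z : HV n := b ⟨2 * n, by omega⟩ with hz_def
  have hzne : z ≠ 0 := b.ne_zero _
  set Z : Submodule ℝ (HV n) := Submodule.span ℝ {z} with hZ_def
  have hcent : ∀ x y, br x y ∈ Z := heis_central br b hb
  have hskew : ∀ x y, br x y = - br y x := heis_skew br b hb
  have hnd0 : ∀ x : HV n, (∀ y, br x y = 0) → x ∈ Z := heis_nondeg br b hb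
  have heigen : ∀ j x, x ∈ U j → A x = α j • x := by
    intro j x hx
    rw [hU j, Module.End.mem_eigenspace_iff] at hx
    exact hx
  have hdisj : ∀ j t : Fin (k + 1), j ≠ t → ∀ x, x ∈ U j → x ∈ U t → x = 0 := by
    intro j t hjt x hxj hxt
    have h1 := heigen j x hxj
    have h2 := heigen t x hxt
    have h3 : (α j - α t) • x = 0 := by rw [sub_smul, ← h1, ← h2, sub_self]
    rcases smul_eq_zero.mp h3 with h | h
    · exact absurd (hαmono.injective (by linarith [sub_eq_zero.mp h])) hjt
    · exact h
  have hdecomp : ∀ x : HV n, ∃ c : Fin (k + 1) → HV n,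
      (∀ j, c j ∈ U j) ∧ ∑ j, c j = x := by
    intro x
    have hx : x ∈ ⨆ j, U j := by rw [hUspan]; trivial
    rw [Submodule.mem_iSup_iff_exists_finsupp] at hx
    obtain ⟨f, hf, hsum⟩ := hx
    refine ⟨fun j => f j, hf, ?_⟩
    rw [← hsum, Finsupp.sum]
    exact (Finset.sum_subset (Finset.subset_univ _)
      (fun j _ hj => Finsupp.notMem_support_iff.mp hj)).symm
  have hind : iSupIndep U := by
    have hUe : U = fun j => Module.End.eigenspace A (α j) := funext hU
    rw [hUe]
    exact (Module.End.eigenspaces_iSupIndep A).comp hαmono.injective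
  have hzero : ∀ c : Fin (k + 1) → HV n, (∀ j, c j ∈ U j) → ∑ j, c j = 0 →
      ∀ j, c j = 0 := by
    intro c hc hsum j
    have h2 : c j ∈ ⨆ t, ⨆ (_ : t ≠ j), U t := by
      rw [← Finset.add_sum_erase _ c (Finset.mem_univ j)] at hsum
      have hcj : c j = - ∑ t ∈ Finset.univ.erase j, c t :=
        eq_neg_of_add_eq_zero_left hsum
      rw [hcj]
      refine Submodule.neg_mem _ (Submodule.sum_mem _ ?_)
      intro t ht
      exact Submodule.mem_iSup_of_mem t
        (Submodule.mem_iSup_of_mem (Finset.ne_of_mem_erase ht) (hc t))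
    exact Submodule.disjoint_def.mp (hind j) _ (hc j) h2
  have hAz : ∃ lam : ℝ, A z = lam • z := by
    have h1 : z = br (b ⟨0, by omega⟩) (b ⟨1, by omega⟩) := by
      rw [hb]
      unfold hcoef
      rw [if_pos ⟨rfl, rfl, show (0:ℕ) < 2 * n by omega⟩, one_smul]
    have h2 : A z ∈ Z := by
      rw [h1, hA]
      exact Submodule.add_mem _ (hcent _ _) (hcent _ _)
    obtain ⟨a, ha⟩ := Submodule.mem_span_singleton.mp h2
    exact ⟨a, ha.symm⟩
  obtain ⟨lam, hlam⟩ := hAz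
  have hsumrule : ∀ (s t : Fin (k + 1)) x y, x ∈ U s → y ∈ U t → br x y ≠ 0 →
      α s + α t = lam := by
    intro s t x y hxs hyt hne
    have hder : A (br x y) = (α s + α t) • br x y := by
      rw [hA, heigen s x hxs, heigen t y hyt, map_smul, LinearMap.smul_apply,
        map_smul, add_smul]
    obtain ⟨c, hc⟩ := Submodule.mem_span_singleton.mp (hcent x y)
    have hcne : c ≠ 0 := by rintro rfl; rw [← hc] at hne; simp at hne
    rw [← hc, map_smul, hlam, smul_smul, smul_smul] at hder
    have h4 := smul_left_injective ℝ hzne hder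
    have h5 : lam = α s + α t := mul_left_cancel₀ hcne (h4.trans (mul_comm _ c))
    linarith
  have hterm : ∀ x y, br x y ≠ 0 → ∃ t y', y' ∈ U t ∧ br x y' ≠ 0 := by
    intro x y hne
    obtain ⟨c, hcU, hcsum⟩ := hdecomp y
    by_contra h
    push_neg at h
    apply hne
    rw [← hcsum, map_sum]
    exact Finset.sum_eq_zero (fun t _ => h t (c t) (hcU t))
  have hlast : z ∈ U (Fin.last k) ∧ lam = α (Fin.last k) := by
    obtain ⟨x, hxU, hxne⟩ := Submodule.exists_mem_ne_zero_of_ne_bot (hUne (Fin.last k))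
    by_cases hxZ : x ∈ Z
    · obtain ⟨c, hc⟩ := Submodule.mem_span_singleton.mp hxZ
      have hcne : c ≠ 0 := by rintro rfl; rw [← hc] at hxne; simp at hxne
      have hzU : z ∈ U (Fin.last k) := by
        have hzx : z = c⁻¹ • x := by
          rw [← hc, smul_smul, inv_mul_cancel₀ hcne, one_smul]
        rw [hzx]
        exact Submodule.smul_mem _ _ hxU
      refine ⟨hzU, ?_⟩
      have h1 : A z = α (Fin.last k) • z := heigen _ _ hzU
      rw [hlam] at h1
      exact smul_left_injective ℝ hzne h1
    · exfalso
      have hbrx : ∃ y, br x y ≠ 0 := by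
        by_contra h; push_neg at h; exact hxZ (hnd0 x h)
      obtain ⟨y, hy⟩ := hbrx
      obtain ⟨t, y', hy'U, hy'⟩ := hterm x y hy
      have h1 : α (Fin.last k) + α t = lam := hsumrule _ _ _ _ hxU hy'U hy'
      obtain ⟨cz, hczU, hczsum⟩ := hdecomp z
      have hz2 : ∃ j0, cz j0 ≠ 0 := by
        by_contra h
        push_neg at h
        apply hzne
        rw [← hczsum]
        exact Finset.sum_eq_zero (fun j _ => h j)
      obtain ⟨j0, hj0⟩ := hz2
      have hck : ∀ j, (α j - lam) • cz j = 0 := by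
        apply hzero (fun j => (α j - lam) • cz j)
          (fun j => Submodule.smul_mem _ _ (hczU j))
        have e1 : A z = ∑ j, α j • cz j := by
          rw [← hczsum, map_sum]
          exact Finset.sum_congr rfl (fun j _ => heigen j _ (hczU j))
        have e2 : A z = ∑ j, lam • cz j := by
          rw [hlam, ← hczsum, Finset.smul_sum]
        simp only [sub_smul]
        rw [Finset.sum_sub_distrib, ← e1, ← e2, sub_self]
      have hlj0 : lam = α j0 := by
        rcases smul_eq_zero.mp (hck j0) with h | h
        · linarith [sub_eq_zero.mp h]
        · exact absurd h hj0
      have hle : α j0 ≤ α (Fin.last k) := hαmono.monotone (Fin.le_last j0)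
      have hpt := hαpos t
      linarith
  obtain ⟨hzU, hlam_eq⟩ := hlast
  have hZle : Z ≤ U (Fin.last k) := by
    rw [hZ_def]
    exact (Submodule.span_singleton_le_iff_mem _ _).mpr hzU
  have hUlastle : U (Fin.last k) ≤ Z := by
    intro x hxU
    apply hnd0
    intro y
    by_contra hne
    obtain ⟨t, y', hy'U, hy'⟩ := hterm x y hne
    have h1 := hsumrule _ _ _ _ hxU hy'U hy'
    rw [hlam_eq] at h1
    have := hαpos t
    linarith
  have hpart : ∀ j : Fin (k + 1), j ≠ Fin.last k →
      ∃ t : Fin (k + 1), t ≠ Fin.last k ∧ α j + α t = α (Fin.last k) := by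
    intro j hj
    obtain ⟨x, hxU, hxne⟩ := Submodule.exists_mem_ne_zero_of_ne_bot (hUne j)
    have hxZ : x ∉ Z := fun h => hxne (hdisj j (Fin.last k) hj x hxU (hZle h))
    have hbrx : ∃ y, br x y ≠ 0 := by
      by_contra h; push_neg at h; exact hxZ (hnd0 x h)
    obtain ⟨y, hy⟩ := hbrx
    obtain ⟨t, y', hy'U, hy'⟩ := hterm x y hy
    have h1 := hsumrule _ _ _ _ hxU hy'U hy'
    rw [hlam_eq] at h1
    refine ⟨t, ?_, h1⟩
    intro ht
    rw [ht] at h1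
    have := hαpos j
    linarith
  have hik : (i : ℕ) < k := by omega
  have hilast : i ≠ Fin.last k := by
    intro h
    have : (i : ℕ) = k := by rw [h]; rfl
    omega
  have hiltlast : i < Fin.last k := by
    rw [Fin.lt_def, Fin.val_last]
    omega
  set part : Fin (k + 1) → Fin (k + 1) :=
    fun j => if h : j ≠ Fin.last k then (hpart j h).choose else j with hpart_def
  have hpart_spec : ∀ j, j ≠ Fin.last k →
      part j ≠ Fin.last k ∧ α j + α (part j) = α (Fin.last k) := by
    intro j hj
    simp only [hpart_def, dif_pos hj]
    exact (hpart j hj).choose_spec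
  have hmid : α i + α i = α (Fin.last k) := by
    rcases lt_trichotomy (α i + α i) (α (Fin.last k)) with hlt | heq | hgt
    · exfalso
      have hmaps : ∀ j ∈ Finset.Iic i, part j ∈ Finset.Ioo i (Fin.last k) := by
        intro j hj
        rw [Finset.mem_Iic] at hj
        have hjne : j ≠ Fin.last k := ne_of_lt (lt_of_le_of_lt hj hiltlast)
        obtain ⟨hp1, hp2⟩ := hpart_spec j hjne
        have hαj : α j ≤ α i := hαmono.monotone hj
        have hgt2 : α i < α (part j) := by linarith
        rw [Finset.mem_Ioo]
        exact ⟨(hαmono.lt_iff_lt).mp hgt2, lt_of_le_of_ne (Fin.le_last _) hp1⟩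
      have hinj : Set.InjOn part (Finset.Iic i) := by
        intro j1 hj1 j2 hj2 heq12
        rw [Finset.coe_Iic, Set.mem_Iic] at hj1 hj2
        have h1 := hpart_spec j1 (ne_of_lt (lt_of_le_of_lt hj1 hiltlast))
        have h2 := hpart_spec j2 (ne_of_lt (lt_of_le_of_lt hj2 hiltlast))
        apply hαmono.injective
        rw [heq12] at h1
        linarith [h1.2, h2.2]
      have hcard := Finset.card_le_card_of_injOn part hmaps hinj
      rw [Fin.card_Iic, Fin.card_Ioo, Fin.val_last] at hcard
      omega
    · exact heq
    · exfalso
      have hmaps : ∀ j ∈ Finset.Ico i (Fin.last k), part j ∈ Finset.Iio i := by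
        intro j hj
        rw [Finset.mem_Ico] at hj
        have hjne : j ≠ Fin.last k := ne_of_lt hj.2
        obtain ⟨hp1, hp2⟩ := hpart_spec j hjne
        have hαj : α i ≤ α j := hαmono.monotone hj.1
        have hlt2 : α (part j) < α i := by linarith
        rw [Finset.mem_Iio]
        exact (hαmono.lt_iff_lt).mp hlt2
      have hinj : Set.InjOn part (Finset.Ico i (Fin.last k)) := by
        intro j1 hj1 j2 hj2 heq12
        rw [Finset.coe_Ico, Set.mem_Ico] at hj1 hj2
        have h1 := hpart_spec j1 (ne_of_lt hj1.2)
        have h2 := hpart_spec j2 (ne_of_lt hj2.2)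
        apply hαmono.injective
        rw [heq12] at h1
        linarith [h1.2, h2.2]
      have hcard := Finset.card_le_card_of_injOn part hmaps hinj
      rw [Fin.card_Ico, Fin.card_Iio, Fin.val_last] at hcard
      omega
  have hndUi : ∀ x, x ∈ U i → x ≠ 0 → ∃ y, y ∈ U i ∧ br x y ≠ 0 := by
    intro x hxU hxne
    have hxZ : x ∉ Z := fun h => hxne (hdisj i (Fin.last k) hilast x hxU (hZle h))
    have hbrx : ∃ y, br x y ≠ 0 := by
      by_contra h; push_neg at h; exact hxZ (hnd0 x h)
    obtain ⟨y, hy⟩ := hbrx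
    obtain ⟨t, y', hy'U, hy'⟩ := hterm x y hy
    have h1 := hsumrule _ _ _ _ hxU hy'U hy'
    rw [hlam_eq] at h1
    have hti : t = i := hαmono.injective (by linarith)
    exact ⟨y', hti ▸ hy'U, hy'⟩
  set φ : HV n →ₗ[ℝ] ℝ := b.coord ⟨2 * n, by omega⟩ with hφ_def
  have hφz : φ z = 1 := by
    simp only [hφ_def, hz_def, Basis.coord_apply, Basis.repr_self]
    exact Finsupp.single_eq_same
  have hbrval : ∀ x y, br x y = φ (br x y) • z := by
    intro x y
    obtain ⟨c, hc⟩ := Submodule.mem_span_singleton.mp (hcent x y)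
    rw [← hc, map_smul, smul_eq_mul, hφz, mul_one]
  obtain ⟨ce, hce⟩ := Submodule.mem_span_singleton.mp (hUlastle he)
  have hcene : ce ≠ 0 := by rintro rfl; rw [← hce] at hene; simp at hene
  set Braw : HV n →ₗ[ℝ] HV n →ₗ[ℝ] ℝ := ce⁻¹ • (br.compr₂ φ) with hBraw_def
  have hBrawapp : ∀ x y, Braw x y = ce⁻¹ * φ (br x y) := by
    intro x y
    simp [hBraw_def, LinearMap.compr₂_apply, smul_eq_mul]
  have hbre : ∀ x y, br x y = Braw x y • e := by
    intro x y
    rw [hBrawapp, ← hce, smul_smul]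
    rw [show ce⁻¹ * φ (br x y) * ce = φ (br x y) by field_simp]
    exact hbrval x y
  set B : ↥(U i) →ₗ[ℝ] ↥(U i) →ₗ[ℝ] ℝ :=
    Braw.compl₁₂ (U i).subtype (U i).subtype with hB_def
  have hBapp : ∀ u v : ↥(U i), B u v = Braw (u : HV n) (v : HV n) := fun _ _ => rfl
  have hbrself : ∀ x : HV n, br x x = 0 := by
    intro x
    have h := hskew x x
    have h3 : (2 : ℝ) • br x x = 0 := by
      rw [two_smul]
      exact eq_neg_iff_add_eq_zero.mp h
    rcases smul_eq_zero.mp h3 with h2 | h2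
    · norm_num at h2
    · exact h2
  have haltB : ∀ u : ↥(U i), B u u = 0 := by
    intro u
    rw [hBapp, hBrawapp, hbrself, map_zero, mul_zero]
  have hndB : ∀ u : ↥(U i), u ≠ 0 → ∃ v, B u v ≠ 0 := by
    intro u hu
    have hu' : (u : HV n) ≠ 0 := fun h => hu (Subtype.ext h)
    obtain ⟨y, hyU, hy⟩ := hndUi u u.2 hu'
    refine ⟨⟨y, hyU⟩, ?_⟩
    rw [hBapp, hBrawapp]
    intro h0
    apply hy
    rcases mul_eq_zero.mp h0 with h | h
    · exact absurd h (inv_ne_zero hcene)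
    · rw [hbrval (u : HV n) y, h, zero_smul]
  obtain ⟨ki, hki, v', w', hli, hspan, hvw, hvv, hww⟩ := symp_full (↥(U i)) B haltB hndB
  have hfun : (Sum.elim (fun s => ((v' s : HV n))) (fun s => ((w' s : HV n))))
      = (U i).subtype ∘ (Sum.elim v' w') := by
    funext j; cases j <;> rfl
  refine ⟨ki, hki, (fun s => (v' s : HV n)), (fun s => (w' s : HV n)),
    fun s => (v' s).2, fun s => (w' s).2, ?_, ?_, ?_, ?_, ?_⟩
  · rw [hfun]
    exact hli.map' _ (Submodule.ker_subtype _)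
  · rw [hfun, Set.range_comp, Submodule.span_image, hspan, Submodule.map_top,
      Submodule.range_subtype]
  · intro s t
    rw [hbre, show Braw (v' s : HV n) (w' t : HV n) = B (v' s) (w' t) from rfl, hvw]
  · intro s t
    rw [hbre, show Braw (v' s : HV n) (v' t : HV n) = B (v' s) (v' t) from rfl, hvv,
      zero_smul]
  · intro s t
    rw [hbre, show Braw (w' s : HV n) (w' t : HV n) = B (w' s) (w' t) from rfl, hww,
      zero_smul]
end
end

section
/- Suppose k ≥ 2 and let H = U_1 ⊕ ⋯ ⊕ U_{k-1} ⊕ 𝓩(𝓗_n), a subgroup of (H_n, *). Two left cosets g*U_1 and g'*U_1 of U_1 lie in the same left coset of H (i.e., g' ∈ g*H) if and only if the Hausdorff distance between g*U_1 and g'*U_1 with respect to d_A is finite. -/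
open scoped BigOperators RealInnerProductSpace ENNReal
open Module Filter

noncomputable section

section AuxBr

variable {n : ℕ} {br : HV n →ₗ[ℝ] HV n →ₗ[ℝ] HV n}

lemma br_skew (hbr : IsHeisenbergBracket n br) (x y : HV n) : br x y = - br y x := by
  obtain ⟨b, hb⟩ := hbr
  have hbasis : ∀ i j, br (b i) (b j) = - br (b j) (b i) := by
    intro i j
    rw [hb, hb, ← neg_smul]
    congr 1
    split_ifs <;> (try omega) <;> norm_num
  have hext : br = - br.flip := by
    apply b.ext; intro i
    apply b.ext; intro j
    simpa using hbasis i j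
  have := LinearMap.congr_fun (LinearMap.congr_fun hext x) y
  simpa using this

lemma br_self (hbr : IsHeisenbergBracket n br) (x : HV n) : br x x = 0 := by
  have h := br_skew hbr x x
  have h2 : (2:ℝ) • br x x = 0 := by
    rw [two_smul]
    rw [add_eq_zero_iff_eq_neg]
    exact h
  rcases smul_eq_zero.mp h2 with h | h
  · norm_num at h
  · exact h

end AuxBr

lemma br_ker_struct {n : ℕ} {br : HV n →ₗ[ℝ] HV n →ₗ[ℝ] HV n}
    (hbr : IsHeisenbergBracket n br) :
    ∃ z : HV n, z ≠ 0 ∧ (∀ x y, br x y ∈ Submodule.span ℝ {z}) ∧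
      LinearMap.ker br = Submodule.span ℝ {z} := by
  obtain ⟨b, hb⟩ := hbr
  set K2n : Fin (2*n+1) := ⟨2*n, by omega⟩ with hK2n
  have hval : (K2n : ℕ) = 2*n := rfl
  set z : HV n := b K2n with hzdef
  have hzne : z ≠ 0 := b.ne_zero _
  -- image is in the span of z
  have hbi : ∀ i j, br (b i) (b j) ∈ Submodule.span ℝ {z} := by
    intro i j
    rw [hb]
    exact Submodule.smul_mem _ _ (Submodule.mem_span_singleton_self z)
  have himgb : ∀ i (y : HV n), br (b i) y ∈ Submodule.span ℝ {z} := by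
    intro i y
    have hle : Submodule.span ℝ (Set.range b) ≤
        (Submodule.span ℝ {z}).comap (br (b i)) := by
      rw [Submodule.span_le]
      rintro _ ⟨j, rfl⟩
      exact hbi i j
    exact hle (by rw [b.span_eq]; trivial)
  have himg : ∀ x y : HV n, br x y ∈ Submodule.span ℝ {z} := by
    intro x y
    have hle : Submodule.span ℝ (Set.range b) ≤
        (Submodule.span ℝ {z}).comap (br.flip y) := by
      rw [Submodule.span_le]
      rintro _ ⟨i, rfl⟩
      exact himgb i y
    exact hle (by rw [b.span_eq]; trivial)
  refine ⟨z, hzne, himg, le_antisymm ?_ ?_⟩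
  · -- ker ≤ span
    intro x hx
    have hrep := b.sum_repr x
    have h0 : ∀ j, br x (b j) = 0 := by
      intro j
      rw [LinearMap.mem_ker] at hx
      rw [hx]
      rfl
    have hcomp : ∀ j : Fin (2*n+1), br x (b j) = ∑ i', (b.repr x i' *
        (if (i':ℕ)%2 = 0 ∧ (j:ℕ) = (i':ℕ)+1 ∧ (i':ℕ) < 2*n then (1:ℝ)
         else if (j:ℕ)%2=0 ∧ (i':ℕ)=(j:ℕ)+1 ∧ (j:ℕ)<2*n then -1 else 0)) • z := by
      intro j
      conv_lhs => rw [← hrep]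
      rw [map_sum, LinearMap.sum_apply]
      refine Finset.sum_congr rfl fun i' _ => ?_
      rw [map_smul, LinearMap.smul_apply, hb, smul_smul]
    have hcoord : ∀ i : Fin (2*n+1), (i:ℕ) ≠ 2*n → b.repr x i = 0 := by
      intro i hi
      have hi' : (i:ℕ) < 2*n := by omega
      by_cases hpar : (i:ℕ) % 2 = 0
      · set j : Fin (2*n+1) := ⟨(i:ℕ)+1, by omega⟩ with hjdef
        have hj : (j:ℕ) = (i:ℕ)+1 := rfl
        have hsum := (h0 j).symm.trans (hcomp j)
        rw [Finset.sum_eq_single i] at hsum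
        · rw [if_pos ⟨hpar, hj, hi'⟩, mul_one] at hsum
          rcases smul_eq_zero.mp hsum.symm with h | h
          · exact h
          · exact absurd h hzne
        · intro i' _ hne
          have hifz : (if (i':ℕ)%2 = 0 ∧ (j:ℕ) = (i':ℕ)+1 ∧ (i':ℕ) < 2*n then (1:ℝ)
              else if (j:ℕ)%2=0 ∧ (i':ℕ)=(j:ℕ)+1 ∧ (j:ℕ)<2*n then -1 else 0) = 0 := by
            have hne' : (i':ℕ) ≠ (i:ℕ) := fun h => hne (Fin.ext h)
            rw [if_neg, if_neg] <;> omega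
          rw [hifz, mul_zero, zero_smul]
        · intro h
          exact absurd (Finset.mem_univ i) h
      · set j : Fin (2*n+1) := ⟨(i:ℕ)-1, by omega⟩ with hjdef
        have hj : (j:ℕ) = (i:ℕ)-1 := rfl
        have hipos : 1 ≤ (i:ℕ) := by omega
        have hsum := (h0 j).symm.trans (hcomp j)
        rw [Finset.sum_eq_single i] at hsum
        · have hif : (if (i:ℕ)%2 = 0 ∧ (j:ℕ) = (i:ℕ)+1 ∧ (i:ℕ) < 2*n then (1:ℝ)
              else if (j:ℕ)%2=0 ∧ (i:ℕ)=(j:ℕ)+1 ∧ (j:ℕ)<2*n then -1 else 0) = -1 := by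
            rw [if_neg, if_pos] <;> omega
          rw [hif] at hsum
          rcases smul_eq_zero.mp hsum.symm with h | h
          · have := mul_eq_zero.mp h
            rcases this with h | h
            · exact h
            · norm_num at h
          · exact absurd h hzne
        · intro i' _ hne
          have hifz : (if (i':ℕ)%2 = 0 ∧ (j:ℕ) = (i':ℕ)+1 ∧ (i':ℕ) < 2*n then (1:ℝ)
              else if (j:ℕ)%2=0 ∧ (i':ℕ)=(j:ℕ)+1 ∧ (j:ℕ)<2*n then -1 else 0) = 0 := by
            have hne' : (i':ℕ) ≠ (i:ℕ) := fun h => hne (Fin.ext h)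
            rw [if_neg, if_neg] <;> omega
          rw [hifz, mul_zero, zero_smul]
        · intro h
          exact absurd (Finset.mem_univ i) h
    have hxz : x = (b.repr x K2n) • z := by
      conv_lhs => rw [← hrep]
      rw [Finset.sum_eq_single K2n]
      · intro i' _ hne
        rw [hcoord i' (fun h => hne (Fin.ext h)), zero_smul]
      · intro h
        exact absurd (Finset.mem_univ K2n) h
    rw [hxz]
    exact Submodule.smul_mem _ _ (Submodule.mem_span_singleton_self z)
  · -- span ≤ ker
    rw [Submodule.span_le, Set.singleton_subset_iff]
    rw [SetLike.mem_coe, LinearMap.mem_ker]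
    apply b.ext
    intro j
    rw [hb]
    have hifz : (if (K2n:ℕ)%2 = 0 ∧ (j:ℕ) = (K2n:ℕ)+1 ∧ (K2n:ℕ) < 2*n then (1:ℝ)
        else if (j:ℕ)%2=0 ∧ (K2n:ℕ)=(j:ℕ)+1 ∧ (j:ℕ)<2*n then -1 else 0) = 0 := by
      rw [if_neg, if_neg] <;> omega
    rw [hifz, zero_smul]
    rfl

section AuxGrp

variable {n : ℕ} {br : HV n →ₗ[ℝ] HV n →ₗ[ℝ] HV n}

lemma br_mem_ker (hbr : IsHeisenbergBracket n br) (x y : HV n) :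
    br x y ∈ LinearMap.ker br := by
  obtain ⟨z, hz, himg, hker⟩ := br_ker_struct hbr
  rw [hker]
  exact himg x y

lemma br_br_left (hbr : IsHeisenbergBracket n br) (x y c : HV n) :
    br (br x y) c = 0 := by
  have h := br_mem_ker hbr x y
  rw [LinearMap.mem_ker] at h
  rw [h]
  rfl

lemma br_br_right (hbr : IsHeisenbergBracket n br) (x y c : HV n) :
    br c (br x y) = 0 := by
  rw [br_skew hbr, br_br_left hbr, neg_zero]

lemma hMul_neg_cancel (hbr : IsHeisenbergBracket n br) (g x : HV n) :
    hMul br (-g) (hMul br g x) = x := by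
  simp only [hMul, map_add, map_neg, map_smul, LinearMap.add_apply, LinearMap.neg_apply,
    LinearMap.smul_apply, br_br_left hbr, br_br_right hbr, br_self hbr, smul_zero, neg_zero,
    add_zero, zero_add, smul_neg]
  module

lemma hMul_neg_cancel' (hbr : IsHeisenbergBracket n br) (g x : HV n) :
    hMul br g (hMul br (-g) x) = x := by
  have := hMul_neg_cancel hbr (-g) x
  rwa [neg_neg] at this

lemma hMul_calc (hbr : IsHeisenbergBracket n br) (g g' u u' : HV n) :
    hMul br (-(hMul br g u)) (hMul br g' u')
      = hMul br (-g) g' + (u' - u)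
        + (2⁻¹:ℝ) • (br (hMul br (-g) g') u + br (hMul br (-g) g') u')
        - (2⁻¹:ℝ) • br u u' := by
  have hsk : br u g' = - br g' u := br_skew hbr u g'
  have hsk2 : br u g = - br g u := br_skew hbr u g
  simp only [hMul, map_add, map_neg, map_smul, LinearMap.add_apply, LinearMap.neg_apply,
    LinearMap.smul_apply, br_br_left hbr, br_br_right hbr, br_self hbr, smul_zero, neg_zero,
    add_zero, zero_add, neg_add, smul_neg, neg_neg, smul_add, hsk, hsk2]
  module

lemma mem_leftCoset_iff' (hbr : IsHeisenbergBracket n br) (S : Set (HV n)) (w w' : HV n) :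
    w' ∈ leftCoset br w S ↔ hMul br (-w) w' ∈ S := by
  constructor
  · rintro ⟨s, hs, rfl⟩
    rwa [hMul_neg_cancel hbr]
  · intro h
    exact ⟨_, h, hMul_neg_cancel' hbr w w'⟩

end AuxGrp

set_option maxHeartbeats 1000000 in
theorem stmt14
    (n k : ℕ) (hn : 1 ≤ n) (hk : 1 ≤ k)
    (br : HV n →ₗ[ℝ] HV n →ₗ[ℝ] HV n) (hbr : IsHeisenbergBracket n br)
    (A : HV n →ₗ[ℝ] HV n) (hA : IsDerivation br A)
    (α : Fin (k + 1) → ℝ) (hαmono : StrictMono α) (hαpos : ∀ i, 0 < α i)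
    (U : Fin (k + 1) → Submodule ℝ (HV n))
    (hU : ∀ i, U i = Module.End.eigenspace A (α i))
    (hUne : ∀ i, U i ≠ ⊥) (hUspan : (⨆ i, U i) = ⊤)
    (hUorth : ∀ i j, i ≠ j → ∀ x ∈ U i, ∀ y ∈ U j, (inner ℝ x y : ℝ) = 0)
    (hbrnorm : ∀ x y : HV n, ‖br x y‖ ≤ ‖x‖ * ‖y‖)
    (hk2 : 2 ≤ k) :
    ∀ g g' : HV n,
      g' ∈ leftCoset br g
        ((((⨆ i : Fin (k + 1), if (i : ℕ) + 1 < k then U i else ⊥) ⊔ LinearMap.ker br :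
          Submodule ℝ (HV n))) : Set (HV n)) ↔
      ∃ R : ℝ,
        (∀ x ∈ leftCoset br g (U 0 : Set (HV n)),
          ∃ y ∈ leftCoset br g' (U 0 : Set (HV n)), qd br α U x y ≤ R) ∧
        (∀ y ∈ leftCoset br g' (U 0 : Set (HV n)),
          ∃ x ∈ leftCoset br g (U 0 : Set (HV n)), qd br α U x y ≤ R) := by
  classical
  -- projections onto the eigenspaces
  set PL : Fin (k+1) → (HV n →ₗ[ℝ] HV n) :=
    fun i => (U i).subtype.comp ((U i).orthogonalProjectionOnto).toLinearMap with hPLdef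
  have hPL : ∀ (i : Fin (k+1)) (x : HV n),
      (((U i).orthogonalProjectionOnto x : HV n)) = PL i x := fun _ _ => rfl
  have projmem : ∀ (i : Fin (k+1)) (x : HV n), PL i x ∈ U i :=
    fun i x => (((U i).orthogonalProjectionOnto) x).2
  have projself : ∀ (i : Fin (k+1)) (x : HV n), x ∈ U i → PL i x = x := by
    intro i x hx
    exact (U i).starProjection_eq_self_iff.mpr hx
  have projzero : ∀ (i j : Fin (k+1)), i ≠ j → ∀ (x : HV n), x ∈ U i → PL j x = 0 := by
    intro i j hij x hx
    have hxo : x ∈ (U j)ᗮ := by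
      rw [Submodule.mem_orthogonal]
      intro u hu
      exact hUorth j i (Ne.symm hij) u hu x hx
    have := Submodule.orthogonalProjectionOnto_apply_of_mem_orthogonal hxo
    simp only [hPLdef, LinearMap.comp_apply, ContinuousLinearMap.coe_coe, this]
    rfl
  have projsum : ∀ x : HV n, ∑ i, PL i x = x := by
    have hTall : ⊤ ≤ LinearMap.ker ((∑ i, PL i) - LinearMap.id) := by
      rw [← hUspan]
      apply iSup_le
      intro i x hx
      rw [LinearMap.mem_ker, LinearMap.sub_apply, LinearMap.id_apply, sub_eq_zero,
        LinearMap.sum_apply, Finset.sum_eq_single i]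
      · exact projself i x hx
      · intro j _ hne
        exact projzero i j (Ne.symm hne) x hx
      · intro h
        exact absurd (Finset.mem_univ i) h
    intro x
    have := hTall (Submodule.mem_top : x ∈ ⊤)
    rw [LinearMap.mem_ker, LinearMap.sub_apply, LinearMap.id_apply, sub_eq_zero,
      LinearMap.sum_apply] at this
    exact this
  -- eigenvalue facts
  have eigvec : ∀ (i : Fin (k+1)) (x : HV n), x ∈ U i → A x = α i • x := by
    intro i x hx
    rw [hU i] at hx
    exact Module.End.mem_eigenspace_iff.mp hx
  have EV : ∀ (v : HV n) (μ : ℝ), v ≠ 0 → A v = μ • v → ∃ i, α i = μ := by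
    intro v μ hv hAv
    by_contra hcon
    push_neg at hcon
    have hz : ∀ j, PL j v = 0 := by
      intro j
      have h1 : A v = ∑ i, α i • PL i v := by
        conv_lhs => rw [← projsum v]
        rw [map_sum]
        exact Finset.sum_congr rfl fun i _ => eigvec i _ (projmem i v)
      have h2 : ∑ i, α i • PL i v = μ • v := by rw [← h1, hAv]
      have h3 := congrArg (PL j) h2
      rw [map_sum, map_smul] at h3
      rw [Finset.sum_eq_single j] at h3
      · rw [map_smul, projself j _ (projmem j v)] at h3
        have h4 : (α j - μ) • PL j v = 0 := by
          rw [sub_smul, h3, sub_self]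
        rcases smul_eq_zero.mp h4 with h | h
        · exact absurd (by linarith : α j = μ) (hcon j)
        · exact h
      · intro i _ hne
        rw [map_smul, projzero i j hne _ (projmem i v), smul_zero]
      · intro h
        exact absurd (Finset.mem_univ j) h
    apply hv
    rw [← projsum v]
    exact Finset.sum_eq_zero fun j _ => hz j
  have disj : ∀ (i j : Fin (k+1)), i ≠ j → ∀ x : HV n, x ∈ U i → x ∈ U j → x = 0 := by
    intro i j hij x hxi hxj
    have h1 := eigvec i x hxi
    have h2 := eigvec j x hxj
    have h3 : (α i - α j) • x = 0 := by rw [sub_smul, ← h1, ← h2, sub_self]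
    rcases smul_eq_zero.mp h3 with h | h
    · exact absurd (hαmono.injective (by linarith [sub_eq_zero.mp h])) hij
    · exact h
  obtain ⟨z, hzne, himg, hker⟩ := br_ker_struct hbr
  have hAker : ∀ x ∈ LinearMap.ker br, A x ∈ LinearMap.ker br := by
    intro x hx
    rw [LinearMap.mem_ker] at hx ⊢
    apply LinearMap.ext
    intro y
    have h := hA x y
    simp only [hx, LinearMap.zero_apply, map_zero, LinearMap.map_zero] at h
    rw [LinearMap.zero_apply]
    simpa using h.symm
  -- the bracket raises eigenvalues
  have brderiv : ∀ (i j : Fin (k+1)) (x y : HV n), x ∈ U i → y ∈ U j →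
      A (br x y) = (α i + α j) • br x y := by
    intro i j x y hx hy
    rw [hA x y, eigvec i x hx, eigvec j y hy, map_smul, LinearMap.smul_apply, map_smul, add_smul]
  set K : Fin (k+1) := Fin.last k with hKdef
  have hKval : (K : ℕ) = k := rfl
  have hUK_ker : U K ≤ LinearMap.ker br := by
    intro x hx
    by_contra hxk
    have hbx : ∃ y, br x y ≠ 0 := by
      by_contra h
      push_neg at h
      exact hxk (LinearMap.mem_ker.mpr (LinearMap.ext h))
    obtain ⟨y, hy⟩ := hbx
    have hex : ∃ j, br x (PL j y) ≠ 0 := by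
      by_contra h
      push_neg at h
      apply hy
      conv_lhs => rw [← projsum y]
      rw [map_sum]
      exact Finset.sum_eq_zero fun j _ => h j
    obtain ⟨j, hj⟩ := hex
    have hv := brderiv K j x (PL j y) hx (projmem j y)
    obtain ⟨m', hm'⟩ := EV _ _ hj hv
    have hle : α m' ≤ α K := hαmono.monotone (Fin.le_last m')
    linarith [hαpos j]
  have hkerK : LinearMap.ker br = U K := by
    obtain ⟨x, hx, hx0⟩ := (Submodule.ne_bot_iff (U K)).mp (hUne K)
    -- z is an eigenvector
    have hzker : z ∈ LinearMap.ker br := by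
      rw [hker]; exact Submodule.mem_span_singleton_self z
    obtain ⟨c, hc⟩ := Submodule.mem_span_singleton.mp (hker ▸ hAker z hzker)
    obtain ⟨m, hm⟩ := EV z c hzne hc.symm
    have hzm : z ∈ U m := by
      rw [hU m]
      exact Module.End.mem_eigenspace_iff.mpr (by rw [hm]; exact hc.symm)
    have hxm : x ∈ U m := by
      have hxz := hUK_ker hx
      rw [hker] at hxz
      obtain ⟨d, hd⟩ := Submodule.mem_span_singleton.mp hxz
      rw [← hd]
      exact Submodule.smul_mem _ _ hzm
    have hmK : m = K := by
      by_contra hne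
      exact hx0 (disj K m (fun h => hne h.symm) x hx hxm)
    refine le_antisymm ?_ hUK_ker
    rw [hker, Submodule.span_le, Set.singleton_subset_iff]
    exact hmK ▸ hzm
  have brUU : ∀ (i j : Fin (k+1)) (x y : HV n), x ∈ U i → y ∈ U j →
      α i + α j ≠ α K → br x y = 0 := by
    intro i j x y hx hy hne
    by_contra hne0
    have h1 := brderiv i j x y hx hy
    have h2 : br x y ∈ U K := hkerK ▸ br_mem_ker hbr x y
    have h3 := eigvec K _ h2
    have h4 : (α i + α j - α K) • br x y = 0 := by
      rw [sub_smul, ← h1, ← h3, sub_self]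
    rcases smul_eq_zero.mp h4 with h | h
    · exact hne (by linarith)
    · exact hne0 h
  set K1 : Fin (k+1) := ⟨k-1, by omega⟩ with hK1def
  have hK1val : (K1 : ℕ) = k - 1 := rfl
  have hK1K : K1 ≠ K := by
    intro h
    have := congrArg Fin.val h
    rw [hK1val, hKval] at this
    omega
  have h0K1 : (0 : Fin (k+1)) ≠ K1 := by
    intro h
    have := congrArg Fin.val h
    rw [hK1val] at this
    simp at this
    omega
  have h0K : (0 : Fin (k+1)) ≠ K := by
    intro h
    have := congrArg Fin.val h
    rw [hKval] at this
    simp at this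
    omega
  have hα0K1 : α 0 < α K1 := by
    apply hαmono
    rw [Fin.lt_def, hK1val]
    simp
    omega
  have hα0K : α 0 < α K := by
    apply hαmono
    rw [Fin.lt_def, hKval]
    simp
    omega
  -- existence of a pairing partner
  have existsj : ∀ (i : Fin (k+1)) (x : HV n), x ∈ U i → x ∉ LinearMap.ker br →
      ∃ (j : Fin (k+1)) (e : HV n), e ∈ U j ∧ br x e ≠ 0 ∧ α i + α j = α K := by
    intro i x hx hxk
    have hbx : ∃ y, br x y ≠ 0 := by
      by_contra h
      push_neg at h
      exact hxk (LinearMap.mem_ker.mpr (LinearMap.ext h))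
    obtain ⟨y, hy⟩ := hbx
    have hex : ∃ j, br x (PL j y) ≠ 0 := by
      by_contra h
      push_neg at h
      apply hy
      conv_lhs => rw [← projsum y]
      rw [map_sum]
      exact Finset.sum_eq_zero fun j _ => h j
    obtain ⟨j, hj⟩ := hex
    refine ⟨j, PL j y, projmem j y, hj, ?_⟩
    by_contra hne
    exact hj (brUU i j x (PL j y) hx (projmem j y) hne)
  have hnotker : ∀ (i : Fin (k+1)), i ≠ K → ∀ x : HV n, x ∈ U i → x ≠ 0 →
      x ∉ LinearMap.ker br := by
    intro i hi x hx hx0 hxk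
    rw [hkerK] at hxk
    exact hx0 (disj i K hi x hx hxk)
  have hsumK : α K1 + α 0 = α K := by
    obtain ⟨x1, hx1, hx1ne⟩ := (Submodule.ne_bot_iff (U K1)).mp (hUne K1)
    obtain ⟨j, e, hej, hbe, hjeq⟩ := existsj K1 x1 hx1 (hnotker K1 hK1K x1 hx1 hx1ne)
    obtain ⟨x0, hx0, hx0ne⟩ := (Submodule.ne_bot_iff (U 0)).mp (hUne 0)
    obtain ⟨p, e', hep, hbe', hpeq⟩ := existsj 0 x0 hx0 (hnotker 0 h0K x0 hx0 hx0ne)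
    have hpK : p ≠ K := by
      intro h
      rw [h] at hpeq
      linarith [hαpos (0 : Fin (k+1))]
    have hpK1 : α p ≤ α K1 := by
      apply hαmono.monotone
      rw [Fin.le_def, hK1val]
      have := p.isLt
      have hne : (p : ℕ) ≠ k := fun h => hpK (Fin.ext (h.trans hKval.symm))
      omega
    have hj0 : α 0 ≤ α j := hαmono.monotone (Fin.zero_le j)
    linarith
  have hU00 : ∀ u u' : HV n, u ∈ U 0 → u' ∈ U 0 → br u u' = 0 := by
    intro u u' hu hu'
    exact brUU 0 0 u u' hu hu' (by linarith)
  have hbrH0 : ∀ (i : Fin (k+1)), i ≠ K1 → ∀ x u : HV n, x ∈ U i → u ∈ U 0 →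
      br x u = 0 := by
    intro i hi x u hx hu
    by_cases hiK : i = K
    · subst hiK
      have := LinearMap.mem_ker.mp (hUK_ker hx)
      rw [this]
      rfl
    · apply brUU i 0 x u hx hu
      have hiv : (i : ℕ) < k - 1 := by
        have := i.isLt
        have h1 : (i : ℕ) ≠ k - 1 := fun h => hi (Fin.ext (h.trans hK1val.symm))
        have h2 : (i : ℕ) ≠ k := fun h => hiK (Fin.ext (h.trans hKval.symm))
        omega
      have : α i < α K1 := hαmono (by rw [Fin.lt_def, hK1val]; exact hiv)
      linarith
  have brS : ∀ s u : HV n, u ∈ U 0 → br s u = br (PL K1 s) u := by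
    intro s u hu
    conv_lhs => rw [← projsum s]
    rw [map_sum, LinearMap.sum_apply, Finset.sum_eq_single K1]
    · intro i _ hne
      exact hbrH0 i hne _ u (projmem i s) hu
    · intro h
      exact absurd (Finset.mem_univ K1) h
  -- membership in H is vanishing of the K1 component
  set Hs : Submodule ℝ (HV n) :=
    (⨆ i : Fin (k + 1), if (i : ℕ) + 1 < k then U i else ⊥) ⊔ LinearMap.ker br with hHsdef
  have hH' : ∀ x : HV n, x ∈ Hs ↔ PL K1 x = 0 := by
    intro x
    constructor
    · intro hx
      have hle : Hs ≤ LinearMap.ker (PL K1) := by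
        apply sup_le
        · apply iSup_le
          intro i
          split_ifs with hc
          · intro v hv
            rw [LinearMap.mem_ker]
            refine projzero i K1 ?_ v hv
            intro h
            have := congrArg Fin.val h
            rw [hK1val] at this
            omega
          · exact bot_le
        · rw [hkerK]
          intro v hv
          rw [LinearMap.mem_ker]
          exact projzero K K1 (Ne.symm hK1K) v hv
      exact LinearMap.mem_ker.mp (hle hx)
    · intro hx0
      have hxs : x = ∑ i, PL i x := (projsum x).symm
      rw [hxs]
      apply Submodule.sum_mem
      intro j _
      by_cases hj : j = K1
      · rw [hj, hx0]
        exact Submodule.zero_mem _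
      · by_cases hjK : j = K
        · apply Submodule.mem_sup_right
          rw [hkerK, hjK]
          exact projmem K x
        · apply Submodule.mem_sup_left
          have hjv : (j : ℕ) + 1 < k := by
            have := j.isLt
            have h1 : (j : ℕ) ≠ k - 1 := fun h => hj (Fin.ext (h.trans hK1val.symm))
            have h2 : (j : ℕ) ≠ k := fun h => hjK (Fin.ext (h.trans hKval.symm))
            omega
          have hle : U j ≤ ⨆ i : Fin (k + 1), if (i : ℕ) + 1 < k then U i else ⊥ := by
            have := le_iSup (fun i : Fin (k+1) => if (i : ℕ) + 1 < k then U i else ⊥) j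
            rwa [if_pos hjv] at this
          exact hle (projmem j x)
  -- basic facts about normA
  have hnormA : ∀ x : HV n, normA α U x = ∑ i : Fin (k+1), ‖(PL i x : HV n)‖ ^ (α i)⁻¹ := by
    intro x
    simp only [normA, hPL]
  have hnormA_nonneg : ∀ x : HV n, 0 ≤ normA α U x := by
    intro x
    rw [hnormA]
    exact Finset.sum_nonneg fun i _ => Real.rpow_nonneg (norm_nonneg _) _
  have hcomp_le : ∀ (j : Fin (k+1)) (x : HV n) (R : ℝ), normA α U x ≤ R →
      ‖PL j x‖ ≤ R ^ (α j) := by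
    intro j x R hxR
    have hR0 : 0 ≤ R := le_trans (hnormA_nonneg x) hxR
    have h1 : ‖PL j x‖ ^ (α j)⁻¹ ≤ normA α U x := by
      rw [hnormA]
      exact Finset.single_le_sum (f := fun i : Fin (k+1) => ‖(PL i x : HV n)‖ ^ (α i)⁻¹)
        (fun i _ => Real.rpow_nonneg (norm_nonneg _) _) (Finset.mem_univ j)
    calc ‖PL j x‖ = (‖PL j x‖ ^ (α j)⁻¹) ^ (α j) :=
          (Real.rpow_inv_rpow (norm_nonneg _) (ne_of_gt (hαpos j))).symm
      _ ≤ R ^ (α j) := Real.rpow_le_rpow (Real.rpow_nonneg (norm_nonneg _) _)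
          (h1.trans hxR) (le_of_lt (hαpos j))
  -- the main equivalence
  intro g g'
  rw [mem_leftCoset_iff' hbr]
  set s : HV n := hMul br (-g) g' with hsdef
  rw [SetLike.mem_coe, hH' s]
  constructor
  · -- forward direction
    intro hs0
    refine ⟨normA α U s, ?_, ?_⟩
    · rintro x ⟨u, hu, rfl⟩
      refine ⟨hMul br g' u, ⟨u, hu, rfl⟩, ?_⟩
      simp only [qd]
      rw [hMul_calc hbr g g' u u, ← hsdef]
      have hb1 : br s u = 0 := by
        rw [brS s u hu, hs0]
        simp
      rw [hb1, br_self hbr u]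
      simp
    · rintro y ⟨u', hu', rfl⟩
      refine ⟨hMul br g u', ⟨u', hu', rfl⟩, ?_⟩
      simp only [qd]
      rw [hMul_calc hbr g g' u' u', ← hsdef]
      have hb1 : br s u' = 0 := by
        rw [brS s u' hu', hs0]
        simp
      rw [hb1, br_self hbr u']
      simp
  · -- converse
    rintro ⟨R, hR1, hR2⟩
    by_contra hs0
    set h₁ : HV n := PL K1 s with hh1def
    have hh1U : h₁ ∈ U K1 := projmem K1 s
    obtain ⟨j, e, hej, hbe, hjeq⟩ := existsj K1 h₁ hh1U (hnotker K1 hK1K h₁ hh1U hs0)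
    have hj0 : j = 0 := hαmono.injective (by linarith)
    subst hj0
    obtain ⟨y0, _, hq0⟩ := hR1 (hMul br g 0) ⟨0, Submodule.zero_mem _, rfl⟩
    have hR0 : 0 ≤ R := le_trans (hnormA_nonneg _) hq0
    set C : ℝ := R ^ (α 0) + ‖PL 0 s‖ with hCdef
    have hC0 : 0 ≤ C := add_nonneg (Real.rpow_nonneg hR0 _) (norm_nonneg _)
    have hbe0 : 0 < ‖br h₁ e‖ := norm_pos_iff.mpr hbe
    set t : ℝ := (R ^ (α K) + ‖PL K s‖ + ‖h₁‖ * C + 1) / ‖br h₁ e‖ with htdef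
    have hnum0 : 0 ≤ R ^ (α K) + ‖PL K s‖ + ‖h₁‖ * C + 1 :=
      add_nonneg (add_nonneg (add_nonneg (Real.rpow_nonneg hR0 _) (norm_nonneg _))
        (mul_nonneg (norm_nonneg _) hC0)) zero_le_one
    have ht0 : 0 ≤ t := div_nonneg hnum0 (le_of_lt hbe0)
    obtain ⟨y, hy, hqd⟩ := hR1 (hMul br g (t • e)) ⟨t • e, Submodule.smul_mem _ _ hej, rfl⟩
    obtain ⟨u', hu', rfl⟩ := hy
    set w : HV n := u' - t • e with hwdef
    have hwU : w ∈ U 0 := Submodule.sub_mem _ hu' (Submodule.smul_mem _ _ hej)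
    have hVeq : hMul br (-(hMul br g (t • e))) (hMul br g' u')
        = s + w + t • br h₁ e + (2⁻¹:ℝ) • br h₁ w := by
      rw [hMul_calc hbr g g' (t • e) u', ← hsdef]
      rw [brS s _ (Submodule.smul_mem _ _ hej), brS s u' hu', ← hh1def]
      rw [hU00 _ _ (Submodule.smul_mem _ _ hej) hu']
      rw [map_smul]
      have hbu' : br h₁ u' = br h₁ w + t • br h₁ e := by
        rw [hwdef, map_sub, map_smul]
        abel
      rw [hbu', ← hwdef]
      module
    simp only [qd] at hqd
    rw [hVeq] at hqd
    set V : HV n := s + w + t • br h₁ e + (2⁻¹:ℝ) • br h₁ w with hVdef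
    have hbKe : br h₁ e ∈ U K := by rw [← hkerK]; exact br_mem_ker hbr _ _
    have hbKw : br h₁ w ∈ U K := by rw [← hkerK]; exact br_mem_ker hbr _ _
    have hPL0V : PL 0 V = PL 0 s + w := by
      rw [hVdef, map_add, map_add, map_add, map_smul, map_smul,
        projself 0 w hwU, projzero K 0 (Ne.symm h0K) _ hbKe,
        projzero K 0 (Ne.symm h0K) _ hbKw]
      simp
    have hw_le : ‖w‖ ≤ C := by
      have h1 : ‖PL 0 V‖ ≤ R ^ (α 0) := hcomp_le 0 V R hqd
      rw [hPL0V] at h1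
      have h2 : ‖w‖ ≤ ‖PL 0 s + w‖ + ‖PL 0 s‖ := by
        calc ‖w‖ = ‖(PL 0 s + w) - PL 0 s‖ := by congr 1; abel
          _ ≤ ‖PL 0 s + w‖ + ‖PL 0 s‖ := norm_sub_le _ _
      rw [hCdef]
      linarith
    have hPLKV : PL K V = PL K s + t • br h₁ e + (2⁻¹:ℝ) • br h₁ w := by
      rw [hVdef, map_add, map_add, map_add, map_smul, map_smul,
        projself K _ hbKe, projself K _ hbKw, projzero 0 K h0K w hwU]
      simp
    have hK_le : ‖PL K s + t • br h₁ e + (2⁻¹:ℝ) • br h₁ w‖ ≤ R ^ (α K) := by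
      rw [← hPLKV]
      exact hcomp_le K V R hqd
    have hbw_le : ‖br h₁ w‖ ≤ ‖h₁‖ * C :=
      le_trans (hbrnorm h₁ w) (mul_le_mul_of_nonneg_left hw_le (norm_nonneg _))
    have htne : ‖t • br h₁ e‖ = t * ‖br h₁ e‖ := by
      rw [norm_smul, Real.norm_eq_abs, abs_of_nonneg ht0]
    have hbound : t * ‖br h₁ e‖ ≤ R ^ (α K) + ‖PL K s‖ + ‖h₁‖ * C := by
      rw [← htne]
      have hdec : ‖t • br h₁ e‖
          ≤ ‖(PL K s + t • br h₁ e + (2⁻¹:ℝ) • br h₁ w) - PL K s‖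
            + ‖(2⁻¹:ℝ) • br h₁ w‖ := by
        have hns := norm_sub_le
          ((PL K s + t • br h₁ e + (2⁻¹:ℝ) • br h₁ w) - PL K s) ((2⁻¹:ℝ) • br h₁ w)
        have heq : ((PL K s + t • br h₁ e + (2⁻¹:ℝ) • br h₁ w) - PL K s)
            - (2⁻¹:ℝ) • br h₁ w = t • br h₁ e := by abel
        rw [heq] at hns
        exact hns
      have hdec2 : ‖(PL K s + t • br h₁ e + (2⁻¹:ℝ) • br h₁ w) - PL K s‖
          ≤ ‖PL K s + t • br h₁ e + (2⁻¹:ℝ) • br h₁ w‖ + ‖PL K s‖ := norm_sub_le _ _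
      have hhalf : ‖(2⁻¹:ℝ) • br h₁ w‖ = 2⁻¹ * ‖br h₁ w‖ := by
        rw [norm_smul, Real.norm_eq_abs]
        norm_num
      have hbw0 : 0 ≤ ‖br h₁ w‖ := norm_nonneg _
      linarith
    have htmul : t * ‖br h₁ e‖ = R ^ (α K) + ‖PL K s‖ + ‖h₁‖ * C + 1 := by
      rw [htdef]
      exact div_mul_cancel₀ _ (ne_of_gt hbe0)
    linarith
end
end
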